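/- arXiv:1503.04418 — 5 statements merged into one kernel-verified Lean document; each statement's English description precedes it below -/
import Mathlib

section
/- Let F be a field of characteristic 2 and let R be a finite-dimensional totally singular conic F-algebra. Then R is commutative, R is a local ring, and its unique maximal ideal is 𝔪 = {x ∈ R : x² = 0}. Moreover, for every u ∈ R not in (the image of) F, the subalgebra F[u] generated by u is a field if and only if u² is not the square of an element of F. -/
/-- The minimum rank of a finite-dimensional `F`-algebra `R`: the least cardinality of a
subset of `R` generating `R` as an `F`-algebra. -/
noncomputable def minRank (F R : Type*) [CommSemiring F] [Semiring R] [Algebra F R] : ℕ :=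
  sInf {n : ℕ | ∃ s : Finset R, s.card = n ∧ Algebra.adjoin F (s : Set R) = ⊤}

/-- Auxiliary: in a commutative ring where `u ^ 2` is a scalar, every element of `F[u]`
has the form `c + d * u`. -/
theorem aux_mem {F R : Type*} [Field F] [CommRing R] [Algebra F R] (u : R) (a : F)
    (ha : u ^ 2 = algebraMap F R a) {x : R} (hx : x ∈ Algebra.adjoin F ({u} : Set R)) :
    ∃ c d : F, x = algebraMap F R c + algebraMap F R d * u := by
  induction hx using Algebra.adjoin_induction with
  | mem y hy =>
    rcases hy with rfl
    exact ⟨0, 1, by simp⟩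
  | algebraMap c => exact ⟨c, 0, by simp⟩
  | add x y _ _ hx hy =>
    obtain ⟨c, d, rfl⟩ := hx
    obtain ⟨c', d', rfl⟩ := hy
    exact ⟨c + c', d + d', by simp only [map_add]; ring⟩
  | mul x y _ _ hx hy =>
    obtain ⟨c, d, rfl⟩ := hx
    obtain ⟨c', d', rfl⟩ := hy
    exact ⟨c * c' + d * d' * a, c * d' + d * c', by
      simp only [map_add, map_mul]
      linear_combination (algebraMap F R d * algebraMap F R d') * ha⟩

theorem stmt_0 (F R : Type*) [Field F] [CharP F 2] [Ring R] [Algebra F R]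
    [FiniteDimensional F R] [Nontrivial R]
    (hconic : ∀ x : R, ∃ a : F, x ^ 2 = algebraMap F R a) :
    (∀ x y : R, x * y = y * x) ∧
    IsLocalRing R ∧
    (∀ I : Ideal R, I.IsMaximal → (I : Set R) = {x : R | x ^ 2 = 0}) ∧
    (∀ u : R, u ∉ Set.range (algebraMap F R) →
      (IsField (Algebra.adjoin F ({u} : Set R)) ↔ ¬∃ a : F, u ^ 2 = algebraMap F R (a ^ 2))) := by
  have hinj : Function.Injective (algebraMap F R) := (algebraMap F R).injective
  haveI : CharP R 2 := charP_of_injective_algebraMap hinj 2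
  have hF2 : (2 : F) = 0 := by exact_mod_cast CharP.cast_eq_zero F 2
  have h2 : (2 : R) = 0 := by exact_mod_cast CharP.cast_eq_zero R 2
  -- Commutativity
  have comm : ∀ x y : R, x * y = y * x := by
    intro x y
    obtain ⟨a, ha⟩ := hconic x
    obtain ⟨b, hb⟩ := hconic y
    obtain ⟨e, he⟩ := hconic (x + y)
    obtain ⟨d, hd⟩ := hconic (x * y)
    set c : F := e - a - b with hc_def
    have hxx : x * x = algebraMap F R a := by rw [← sq]; exact ha
    have hyy : y * y = algebraMap F R b := by rw [← sq]; exact hb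
    have hc : x * y + y * x = algebraMap F R c := by
      have h1 : (x + y) ^ 2 = x ^ 2 + (x * y + y * x) + y ^ 2 := by noncomm_ring
      rw [ha, hb, he] at h1
      rw [hc_def, map_sub, map_sub, h1]
      abel
    by_cases hc0 : c = 0
    · rw [hc0, map_zero] at hc
      have hneg : x * y = -(y * x) := eq_neg_of_add_eq_zero_left hc
      rw [hneg, CharTwo.neg_eq]
    · -- xy is a scalar
      have h3 : algebraMap F R c * (x * y) = algebraMap F R (d + a * b) := by
        have h4 : (x * y) * (x * y + y * x) = (x * y) ^ 2 + x * (y * y) * x := by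
          noncomm_ring
        rw [hc, hd, hyy] at h4
        calc algebraMap F R c * (x * y) = (x * y) * algebraMap F R c :=
              (Algebra.commutes c (x * y))
          _ = algebraMap F R d + x * algebraMap F R b * x := h4
          _ = algebraMap F R d + algebraMap F R b * (x * x) := by
              rw [← Algebra.commutes b x, mul_assoc]
          _ = algebraMap F R (d + a * b) := by
              rw [hxx, ← map_mul, ← map_add, mul_comm a b]
      set s : F := (d + a * b) / c with hs_def
      have hs : x * y = algebraMap F R s := by
        calc x * y = algebraMap F R c⁻¹ * (algebraMap F R c * (x * y)) := by
              rw [← mul_assoc, ← map_mul, inv_mul_cancel₀ hc0, map_one, one_mul]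
          _ = algebraMap F R c⁻¹ * algebraMap F R (d + a * b) := by rw [h3]
          _ = algebraMap F R s := by
              rw [← map_mul, hs_def, div_eq_inv_mul]
      have ht : y * x = algebraMap F R (c - s) := by
        rw [map_sub, ← hc, ← hs]; abel
      have h5 : algebraMap F R c * x = 0 := by
        have h6 : x * (y * x) = (x * y) * x := by rw [mul_assoc]
        rw [ht, hs, ← Algebra.commutes (c - s) x] at h6
        have h7 : (algebraMap F R (c - s) - algebraMap F R s) * x = 0 := by
          rw [sub_mul, h6, sub_self]
        rw [← map_sub] at h7
        have h8 : c - s - s = c := by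
          rw [sub_sub, ← two_mul, hF2, zero_mul, sub_zero]
        rwa [h8] at h7
      have hx0 : x = 0 := by
        calc x = algebraMap F R c⁻¹ * (algebraMap F R c * x) := by
              rw [← mul_assoc, ← map_mul, inv_mul_cancel₀ hc0, map_one, one_mul]
          _ = 0 := by rw [h5, mul_zero]
      rw [hx0, zero_mul, mul_zero]
  letI : CommRing R := { ‹Ring R› with mul_comm := comm }
  -- nonunits are square-zero
  have key : ∀ x : R, ¬IsUnit x → x ^ 2 = 0 := by
    intro x hx
    obtain ⟨a, ha⟩ := hconic x
    by_cases hb : ∃ b : F, b ^ 2 = a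
    · obtain ⟨b, rfl⟩ := hb
      rw [map_pow] at ha
      have hn : (x - algebraMap F R b) ^ 2 = 0 := by
        linear_combination ha + (algebraMap F R b ^ 2 - algebraMap F R b * x) * h2
      by_cases hb0 : b = 0
      · subst hb0
        simpa using ha
      · exfalso
        apply hx
        have hub : IsUnit (algebraMap F R b) := (Ne.isUnit hb0).map (algebraMap F R)
        have hnil : IsNilpotent (x - algebraMap F R b) := ⟨2, hn⟩
        have := hnil.isUnit_add_left_of_commute hub (Commute.all _ _)
        simpa using this
    · exfalso
      apply hx
      have ha0 : a ≠ 0 := fun h => hb ⟨0, by simp [h]⟩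
      refine IsUnit.of_mul_eq_one (a := x) (x * algebraMap F R a⁻¹) ?_
      rw [← mul_assoc, ← sq, ha, ← map_mul, mul_inv_cancel₀ ha0, map_one]
  have key' : ∀ x : R, ¬IsUnit x ↔ x ^ 2 = 0 := by
    intro x
    refine ⟨key x, fun h hu => ?_⟩
    have := hu.pow 2
    rw [h] at this
    exact not_isUnit_zero this
  haveI hloc : IsLocalRing R := by
    refine IsLocalRing.of_nonunits_add ?_
    intro a b ha hb
    rw [mem_nonunits_iff, key'] at ha hb ⊢
    linear_combination ha + hb + (a * b) * h2
  refine ⟨comm, hloc, ?_, ?_⟩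
  · intro I hI
    ext x
    simp only [SetLike.mem_coe, Set.mem_setOf_eq]
    constructor
    · intro hx
      refine key x fun hu => ?_
      exact hI.ne_top (Ideal.eq_top_of_isUnit_mem I hx hu)
    · intro hx
      have hxx : x * x ∈ I := by
        rw [← sq, hx]; exact I.zero_mem
      rcases hI.isPrime.mem_or_mem hxx with h | h <;> exact h
  · intro u hu
    obtain ⟨a, ha⟩ := hconic u
    constructor
    · rintro hfield ⟨b, hb⟩
      rw [map_pow] at hb
      have hn2 : (u - algebraMap F R b) ^ 2 = 0 := by
        linear_combination hb + (algebraMap F R b ^ 2 - algebraMap F R b * u) * h2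
      have hnne : u - algebraMap F R b ≠ 0 := by
        intro h
        rw [sub_eq_zero] at h
        exact hu ⟨b, h.symm⟩
      have huA : u ∈ Algebra.adjoin F ({u} : Set R) :=
        Algebra.subset_adjoin (Set.mem_singleton u)
      have hbA : algebraMap F R b ∈ Algebra.adjoin F ({u} : Set R) :=
        Subalgebra.algebraMap_mem _ b
      set n : Algebra.adjoin F ({u} : Set R) := ⟨u - algebraMap F R b, sub_mem huA hbA⟩ with hn_def
      have hn0 : n ≠ 0 := fun h => hnne (congrArg Subtype.val h)
      have hnn : n * n = 0 := by
        apply Subtype.ext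
        show (u - algebraMap F R b) * (u - algebraMap F R b) = 0
        rw [← sq]; exact hn2
      obtain ⟨y, hy⟩ := hfield.mul_inv_cancel hn0
      apply hn0
      calc n = n * (n * y) := by rw [hy, mul_one]
        _ = 0 := by rw [← mul_assoc, hnn, zero_mul]
    · intro hnb
      refine ⟨⟨0, 1, fun h => zero_ne_one (α := R) (congrArg Subtype.val h)⟩,
        fun x y => Subtype.ext (comm x.1 y.1), ?_⟩
      intro x hx
      obtain ⟨s, hs⟩ := hconic (x : R)
      have hsne : s ≠ 0 := by
        intro hs0
        rw [hs0, map_zero] at hs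
        obtain ⟨c, d, hcd⟩ := aux_mem u a ha x.2
        rw [hcd] at hs
        have hF : c ^ 2 + d ^ 2 * a = 0 := by
          apply hinj
          rw [map_add, map_mul, map_pow, map_pow, map_zero, ← hs]
          linear_combination (algebraMap F R d) ^ 2 * ha +
            (algebraMap F R d ^ 2 * algebraMap F R a - algebraMap F R d ^ 2 * u ^ 2 -
              algebraMap F R c * algebraMap F R d * u) * h2
        by_cases hd0 : d = 0
        · have hc0 : c = 0 := by
            have : c ^ 2 = 0 := by rw [hd0] at hF; simpa using hF
            exact pow_eq_zero_iff (n := 2) (by norm_num) |>.mp this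
          apply hx
          apply Subtype.ext
          show (x : R) = 0
          rw [hcd, hc0, hd0]
          simp
        · apply hnb
          refine ⟨c / d, ?_⟩
          rw [ha]
          congr 1
          field_simp
          linear_combination -hF + a * d ^ 2 * hF2
      refine ⟨algebraMap F _ s⁻¹ * x, Subtype.ext ?_⟩
      show (x : R) * (algebraMap F R s⁻¹ * (x : R)) = 1
      rw [show (x : R) * (algebraMap F R s⁻¹ * (x : R)) = algebraMap F R s⁻¹ * ((x:R) ^ 2) by ring,
        hs, ← map_mul, inv_mul_cancel₀ hsne, map_one]
end

section
/- Let F be a field of characteristic 2 and let R be a finite-dimensional totally singular conic F-algebra. If dim_F R = 2^{r_F(R)}, then R is a Frobenius F-algebra, i.e., there exists a nondegenerate associative F-bilinear form on R. -/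
/-- A totally singular conic algebra over a field of characteristic 2 is commutative. -/
private lemma conic_comm {F R : Type*} [Field F] [CharP F 2] [Ring R] [Algebra F R]
    [Nontrivial R]
    (hconic : ∀ x : R, ∃ a : F, x ^ 2 = algebraMap F R a) (x y : R) : x * y = y * x := by
  have hinj : Function.Injective (algebraMap F R) := (algebraMap F R).injective
  obtain ⟨a, ha⟩ := hconic x
  obtain ⟨b, hb⟩ := hconic y
  obtain ⟨s, hs⟩ := hconic (x + y)
  have hxx : x * x = algebraMap F R a := by rw [← ha, sq]
  have hyy : y * y = algebraMap F R b := by rw [← hb, sq]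
  have hc : x * y + y * x = algebraMap F R (s - a - b) := by
    have hexp : (x + y) ^ 2 = x * x + (x * y + y * x) + y * y := by
      rw [sq]; noncomm_ring
    rw [hs, hxx, hyy] at hexp
    rw [map_sub, map_sub, hexp]
    abel
  set c := s - a - b with hcdef
  by_cases hc0 : c = 0
  · rw [hc0, map_zero] at hc
    have hneg : -(y * x) = y * x := by
      have h2 : y * x + y * x = 0 := by
        have h20 : (2 : F) = 0 := CharTwo.two_eq_zero
        have : (2 : F) • (y * x) = 0 := by rw [h20, zero_smul]
        simpa [two_smul] using this
      exact neg_eq_of_add_eq_zero_left h2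
    rw [← hneg]
    exact eq_neg_of_add_eq_zero_left hc
  · exfalso
    have hxyx : x * (y * x) = c • x - a • y := by
      have h1 : x * (x * y + y * x) = algebraMap F R c * x := by
        rw [hc, Algebra.commutes]
      rw [mul_add, ← mul_assoc, hxx, ← Algebra.smul_def, ← Algebra.smul_def] at h1
      -- h1 : a • y + x * (y * x) = c • x
      rw [eq_sub_iff_add_eq, add_comm]
      exact h1
    have hyxy : y * (x * y) = c • y - b • x := by
      have h1 : y * (x * y + y * x) = algebraMap F R c * y := by
        rw [hc, Algebra.commutes]
      rw [mul_add, ← mul_assoc y y x, hyy, ← Algebra.smul_def, ← Algebra.smul_def] at h1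
      -- h1 : y * (x * y) + b • x = c • y
      rw [eq_sub_iff_add_eq]
      exact h1
    obtain ⟨d, hd⟩ := hconic (x * y)
    obtain ⟨d', hd'⟩ := hconic (y * x)
    have hxyval : c • (x * y) = algebraMap F R (d + b * a) := by
      have h1 : (x * y) * (x * y) = x * (y * (x * y)) := by noncomm_ring
      rw [hyxy, mul_sub, mul_smul_comm, mul_smul_comm, hxx] at h1
      have h2 : (x * y) * (x * y) = algebraMap F R d := by rw [← hd, sq]
      rw [h2] at h1
      have : c • (x * y) = algebraMap F R d + b • algebraMap F R a := by
        rw [h1, sub_add_cancel]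
      rw [this, map_add, map_mul, Algebra.smul_def]
    have hyxval : c • (y * x) = algebraMap F R (d' + a * b) := by
      have h1 : (y * x) * (y * x) = y * (x * (y * x)) := by noncomm_ring
      rw [hxyx, mul_sub, mul_smul_comm, mul_smul_comm, hyy] at h1
      have h2 : (y * x) * (y * x) = algebraMap F R d' := by rw [← hd', sq]
      rw [h2] at h1
      have : c • (y * x) = algebraMap F R d' + a • algebraMap F R b := by
        rw [h1, sub_add_cancel]
      rw [this, map_add, map_mul, Algebra.smul_def]
    set α := c⁻¹ * (d + b * a) with hα
    set β := c⁻¹ * (d' + a * b) with hβ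
    have hxyα : x * y = algebraMap F R α := by
      have := congrArg (fun z => c⁻¹ • z) hxyval
      simp only [smul_smul, inv_mul_cancel₀ hc0, one_smul] at this
      rw [this, hα, map_mul, Algebra.smul_def]
    have hyxβ : y * x = algebraMap F R β := by
      have := congrArg (fun z => c⁻¹ • z) hyxval
      simp only [smul_smul, inv_mul_cancel₀ hc0, one_smul] at this
      rw [this, hβ, map_mul, Algebra.smul_def]
    have hαβ : α + β = c := by
      apply hinj
      rw [map_add, ← hxyα, ← hyxβ, hc]
    have hβαx : α • x = β • x := by
      have h : (x * y) * x = x * (y * x) := mul_assoc x y x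
      rw [hxyα, hyxβ, ← Algebra.commutes, ← Algebra.smul_def, ← Algebra.smul_def] at h
      exact h
    have hsub : (β - α) • x = 0 := by rw [sub_smul, ← hβαx, sub_self]
    have hba : β - α ≠ 0 := by
      rw [CharTwo.sub_eq_add, add_comm, hαβ]
      exact hc0
    have hx0 : x = 0 := by
      rcases smul_eq_zero.mp hsub with h | h
      · exact absurd h hba
      · exact h
    apply hc0
    apply hinj
    rw [map_zero, ← hc, hx0, zero_mul, mul_zero, add_zero]

theorem stmt_1 (F R : Type*) [Field F] [CharP F 2] [Ring R] [Algebra F R]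
    [FiniteDimensional F R]
    (hconic : ∀ x : R, ∃ a : F, x ^ 2 = algebraMap F R a)
    (hdim : Module.finrank F R = 2 ^ minRank F R) :
    ∃ b : R →ₗ[F] R →ₗ[F] F,
      (∀ x y z : R, b (x * y) z = b x (y * z)) ∧
      (∀ x : R, (∀ y : R, b x y = 0) → x = 0) ∧
      (∀ y : R, (∀ x : R, b x y = 0) → y = 0) := by
  classical
  obtain hR | hR := subsingleton_or_nontrivial R
  · exact ⟨0, fun x y z => rfl, fun x _ => Subsingleton.elim x 0,
      fun y _ => Subsingleton.elim y 0⟩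
  have hcomm : ∀ x y : R, x * y = y * x := conic_comm hconic
  letI instCR : CommRing R := { ‹Ring R› with mul_comm := hcomm }
  -- a generating set of minimal cardinality
  have hne : {n : ℕ | ∃ s : Finset R, s.card = n ∧ Algebra.adjoin F (s : Set R) = ⊤}.Nonempty := by
    obtain ⟨t, ht⟩ := Module.finite_def.mp ‹FiniteDimensional F R›
    refine ⟨t.card, t, rfl, ?_⟩
    rw [eq_top_iff]
    intro x _
    have hx : x ∈ Submodule.span F (t : Set R) := ht ▸ Submodule.mem_top
    have hle : Submodule.span F (t : Set R) ≤
        Subalgebra.toSubmodule (Algebra.adjoin F (t : Set R)) :=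
      Submodule.span_le.mpr Algebra.subset_adjoin
    exact hle hx
  obtain ⟨s, hscard, hsadj⟩ := Nat.sInf_mem hne
  set f : Finset {x : R // x ∈ s} → R := fun t => ∏ i ∈ t, (i : R) with hf
  -- cardinality
  have hcardι : Fintype.card (Finset {x : R // x ∈ s}) = Module.finrank F R := by
    rw [hdim, Fintype.card_finset, Fintype.card_coe, hscard]
    rfl
  -- the basic product identity for monomials
  have hprodid : ∀ t u : Finset {x : R // x ∈ s},
      f t * f u = (f (t ∩ u)) ^ 2 * f ((t \ u) ∪ (u \ t)) := by
    intro t u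
    have h1 : f (t \ u) * f (t ∩ u) = f t := by
      rw [hf]
      rw [← Finset.prod_union (Finset.disjoint_sdiff_inter t u), Finset.sdiff_union_inter]
    have h2 : f (u \ t) * f (t ∩ u) = f u := by
      rw [hf]
      rw [Finset.inter_comm t u,
        ← Finset.prod_union (Finset.disjoint_sdiff_inter u t), Finset.sdiff_union_inter]
    have h3 : f (t \ u) * f (u \ t) = f ((t \ u) ∪ (u \ t)) := by
      rw [hf, ← Finset.prod_union disjoint_sdiff_sdiff]
    rw [← h1, ← h2, ← h3]
    ring
  have hscalar : ∀ t u : Finset {x : R // x ∈ s},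
      ∃ a : F, f t * f u = a • f ((t \ u) ∪ (u \ t)) := by
    intro t u
    obtain ⟨a, ha⟩ := hconic (f (t ∩ u))
    exact ⟨a, by rw [hprodid t u, ha, Algebra.smul_def]⟩
  have hfempty : f ∅ = 1 := by rw [hf]; exact Finset.prod_empty
  -- spanning
  have hmulmem : ∀ x ∈ Submodule.span F (Set.range f), ∀ y ∈ Submodule.span F (Set.range f),
      x * y ∈ Submodule.span F (Set.range f) := by
    intro x hx y hy
    have hle : Submodule.span F (Set.range f) * Submodule.span F (Set.range f) ≤
        Submodule.span F (Set.range f) := by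
      rw [Submodule.span_mul_span]
      apply Submodule.span_le.mpr
      rintro z hz
      rw [Set.mem_mul] at hz
      obtain ⟨z1, hz1, z2, hz2, rfl⟩ := hz
      obtain ⟨t, rfl⟩ := hz1
      obtain ⟨u, rfl⟩ := hz2
      obtain ⟨a, ha⟩ := hscalar t u
      rw [ha]
      exact Submodule.smul_mem _ _ (Submodule.subset_span ⟨_, rfl⟩)
    exact hle (Submodule.mul_mem_mul hx hy)
  have hspan : ⊤ ≤ Submodule.span F (Set.range f) := by
    intro x hxtop
    have hx : x ∈ Algebra.adjoin F (s : Set R) := hsadj ▸ Algebra.mem_top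
    clear hxtop
    induction hx using Algebra.adjoin_induction with
    | mem z hz =>
        have : z = f {⟨z, hz⟩} := by rw [hf]; simp
        rw [this]
        exact Submodule.subset_span ⟨_, rfl⟩
    | algebraMap r =>
        rw [Algebra.algebraMap_eq_smul_one, ← hfempty]
        exact Submodule.smul_mem _ _ (Submodule.subset_span ⟨_, rfl⟩)
    | add z w hz hw ihz ihw => exact Submodule.add_mem _ ihz ihw
    | mul z w hz hw ihz ihw => exact hmulmem z ihz w ihw
  -- the basis of monomials
  set B : Module.Basis (Finset {x : R // x ∈ s}) F R :=
    basisOfTopLeSpanOfCardEqFinrank f hspan hcardι with hBdef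
  have hB : ⇑B = f := coe_basisOfTopLeSpanOfCardEqFinrank f hspan hcardι
  set lam : R →ₗ[F] F := B.coord Finset.univ with hlam
  have hlamB : ∀ v : Finset {x : R // x ∈ s},
      lam (f v) = if v = Finset.univ then 1 else 0 := by
    intro v
    rw [hlam, ← hB, Module.Basis.coord_apply, Module.Basis.repr_self, Finsupp.single_apply]
  -- key evaluation
  have hkey : ∀ t u : Finset {x : R // x ∈ s},
      lam (f u * f (tᶜ)) = if u = t then 1 else 0 := by
    intro t u
    by_cases hut : u = t
    · subst hut
      have h1 : u ∩ uᶜ = ∅ := Finset.inter_compl u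
      have h2 : (u \ uᶜ) ∪ (uᶜ \ u) = Finset.univ := by
        ext i
        by_cases h : i ∈ u <;> simp [h]
      rw [hprodid, h1, h2, hfempty, one_pow, one_mul, hlamB]
      simp
    · obtain ⟨a, ha⟩ := hscalar u (tᶜ)
      have hv : (u \ tᶜ) ∪ (tᶜ \ u) ≠ Finset.univ := by
        intro hcon
        apply hut
        have : symmDiff u tᶜ = ⊤ := by
          rw [symmDiff_def, Finset.sup_eq_union, Finset.top_eq_univ]
          exact hcon
        have hcompl : IsCompl u tᶜ := (symmDiff_eq_top _ _).mp this
        have := hcompl.eq_compl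
        rwa [compl_compl] at this
      rw [ha, map_smul, hlamB, if_neg hv, smul_zero, if_neg hut]
  -- the bilinear form
  refine ⟨LinearMap.mk₂ F (fun x y => lam (x * y))
    (fun x x' y => by
      show lam ((x + x') * y) = lam (x * y) + lam (x' * y)
      rw [add_mul, map_add])
    (fun c x y => by
      show lam ((c • x) * y) = c • lam (x * y)
      rw [smul_mul_assoc, map_smul])
    (fun x y y' => by
      show lam (x * (y + y')) = lam (x * y) + lam (x * y')
      rw [mul_add, map_add])
    (fun c x y => by
      show lam (x * (c • y)) = c • lam (x * y)
      rw [mul_smul_comm, map_smul]), ?_, ?_, ?_⟩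
  · intro x y z
    simp only [LinearMap.mk₂_apply]
    rw [mul_assoc]
  · intro x hx
    have hco : ∀ t : Finset {x : R // x ∈ s}, B.coord t x = 0 := by
      intro t
      have heq : B.coord t = lam.comp (LinearMap.mulRight F (f (tᶜ))) := by
        apply Module.Basis.ext B
        intro u
        rw [Module.Basis.coord_apply, Module.Basis.repr_self, Finsupp.single_apply,
          LinearMap.comp_apply, LinearMap.mulRight_apply, hB, hkey]
      rw [heq]
      simpa using hx (f (tᶜ))
    exact B.forall_coord_eq_zero_iff.mp hco
  · intro y hy
    have hco : ∀ t : Finset {x : R // x ∈ s}, B.coord t y = 0 := by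
      intro t
      have heq : B.coord t = lam.comp (LinearMap.mulRight F (f (tᶜ))) := by
        apply Module.Basis.ext B
        intro u
        rw [Module.Basis.coord_apply, Module.Basis.repr_self, Finsupp.single_apply,
          LinearMap.comp_apply, LinearMap.mulRight_apply, hB, hkey]
      rw [heq]
      have := hy (f (tᶜ))
      simp only [LinearMap.mk₂_apply] at this
      simpa [hcomm y (f (tᶜ))] using this
    exact B.forall_coord_eq_zero_iff.mp hco
end

section
/- Let F be a field of characteristic 2 and let R be a finite-dimensional totally singular conic F-algebra with unique maximal ideal 𝔪 = {x ∈ R : x² = 0}, and set r = r_F(R/𝔪). If K is a maximal subfield of R containing F (a subalgebra of R that is a field and is maximal among field subalgebras containing F), then K is isomorphic as an F-algebra to the residue field R/𝔪; in particular any two maximal subfields of R containing F are F-isomorphic, dim_F K = dim_F(R/𝔪) = 2^r, and for every x ∈ R one has x² ∈ K² (i.e., x² is the square of an element of the image of K). -/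
section Ext2
variable {F A : Type*} [Field F] [CommRing A] [Algebra F A]

def ext2 (M : Subalgebra F A) (x : A) (hx : x * x ∈ M) : Subalgebra F A where
  carrier := {w | ∃ u ∈ M, ∃ v ∈ M, w = u + v * x}
  add_mem' := by
    rintro a b ⟨u, hu, v, hv, rfl⟩ ⟨u', hu', v', hv', rfl⟩
    exact ⟨u + u', add_mem hu hu', v + v', add_mem hv hv', by ring⟩
  mul_mem' := by
    rintro a b ⟨u, hu, v, hv, rfl⟩ ⟨u', hu', v', hv', rfl⟩
    exact ⟨u * u' + v * v' * (x * x), add_mem (mul_mem hu hu') (mul_mem (mul_mem hv hv') hx),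
      u * v' + u' * v, add_mem (mul_mem hu hv') (mul_mem hu' hv), by ring⟩
  zero_mem' := ⟨0, zero_mem M, 0, zero_mem M, by ring⟩
  one_mem' := ⟨1, one_mem M, 0, zero_mem M, by ring⟩
  algebraMap_mem' := fun a =>
    ⟨algebraMap F A a, Subalgebra.algebraMap_mem M a, 0, zero_mem M, by ring⟩

lemma le_ext2 (M : Subalgebra F A) (x : A) (hx : x * x ∈ M) : M ≤ ext2 M x hx :=
  fun u hu => ⟨u, hu, 0, zero_mem M, by ring⟩

lemma self_mem_ext2 (M : Subalgebra F A) (x : A) (hx : x * x ∈ M) : x ∈ ext2 M x hx :=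
  ⟨0, zero_mem M, 1, one_mem M, by ring⟩

lemma adjoin_insert_eq_ext2 (s : Set A) (x : A)
    (hx : x * x ∈ Algebra.adjoin F s) :
    Algebra.adjoin F (insert x s) = ext2 (Algebra.adjoin F s) x hx := by
  apply le_antisymm
  · apply Algebra.adjoin_le
    rintro y (rfl | hy)
    · exact self_mem_ext2 _ _ hx
    · exact le_ext2 _ _ hx (Algebra.subset_adjoin hy)
  · rintro w ⟨u, hu, v, hv, rfl⟩
    have h1 : Algebra.adjoin F s ≤ Algebra.adjoin F (insert x s) :=
      Algebra.adjoin_mono (Set.subset_insert x s)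
    exact add_mem (h1 hu) (mul_mem (h1 hv) (Algebra.subset_adjoin (Set.mem_insert x s)))

end Ext2

section Dim
variable {F L : Type*} [Field F] [Field L] [Algebra F L] [FiniteDimensional F L]

lemma conic_inv_mem (hc : ∀ z : L, ∃ a : F, z ^ 2 = algebraMap F L a)
    (M : Subalgebra F L) {v : L} (hv : v ∈ M) (hv0 : v ≠ 0) : v⁻¹ ∈ M := by
  obtain ⟨a, ha⟩ := hc v
  have ha0 : algebraMap F L a ≠ 0 := by rw [← ha]; exact pow_ne_zero 2 hv0
  have ha0' : a ≠ 0 := fun h => ha0 (by rw [h, map_zero])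
  have key : v * (v * algebraMap F L a⁻¹) = 1 := by
    rw [← mul_assoc, ← pow_two, ha, ← map_mul, mul_inv_cancel₀ ha0', map_one]
  rw [inv_eq_of_mul_eq_one_right key]
  exact mul_mem hv (Subalgebra.algebraMap_mem M _)

lemma ext2_finrank (hc : ∀ z : L, ∃ a : F, z ^ 2 = algebraMap F L a)
    (M : Subalgebra F L) (x : L) (hx : x * x ∈ M) (hxM : x ∉ M) :
    Module.finrank F (ext2 M x hx) = 2 * Module.finrank F M := by
  let f : (M × M) →ₗ[F] L :=
    { toFun := fun p => (p.1 : L) + (p.2 : L) * x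
      map_add' := by
        intro p q
        simp only [Prod.fst_add, Prod.snd_add]
        push_cast
        ring
      map_smul' := by
        intro c p
        simp only [Prod.smul_fst, Prod.smul_snd, RingHom.id_apply, SetLike.val_smul,
          smul_add, smul_mul_assoc] }
  have hker : ∀ p : M × M, f p = 0 → p = 0 := by
    rintro ⟨u, v⟩ h
    simp only [f, LinearMap.coe_mk, AddHom.coe_mk] at h
    have hv : (v : L) = 0 := by
      by_contra hv0
      have hvinv : (v : L)⁻¹ ∈ M := conic_inv_mem hc M v.2 hv0
      have hxx : x = -(u : L) * (v : L)⁻¹ := by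
        field_simp
        linear_combination h
      exact hxM (hxx ▸ mul_mem (neg_mem u.2) hvinv)
    have hu : (u : L) = 0 := by rw [hv, zero_mul, add_zero] at h; exact h
    exact Prod.ext (Subtype.ext hu) (Subtype.ext hv)
  have hinj : Function.Injective f := LinearMap.ker_eq_bot.mp (LinearMap.ker_eq_bot'.mpr hker)
  have hr : LinearMap.range f = Subalgebra.toSubmodule (ext2 M x hx) := by
    ext w
    constructor
    · rintro ⟨⟨u, v⟩, rfl⟩; exact ⟨u, u.2, v, v.2, rfl⟩
    · rintro ⟨u, hu, v, hv, rfl⟩; exact ⟨(⟨u, hu⟩, ⟨v, hv⟩), rfl⟩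
  have hfe := (LinearEquiv.ofInjective f hinj).finrank_eq
  rw [hr] at hfe
  show Module.finrank F (Subalgebra.toSubmodule (ext2 M x hx)) = 2 * Module.finrank F M
  rw [← hfe, Module.finrank_prod, two_mul]

lemma adjoin_finrank [DecidableEq L] (hc : ∀ z : L, ∃ a : F, z ^ 2 = algebraMap F L a)
    (s : Finset L)
    (hind : ∀ x ∈ s, x ∉ Algebra.adjoin F ((s.erase x : Finset L) : Set L)) :
    Module.finrank F (Algebra.adjoin F (s : Set L)) = 2 ^ s.card := by
  classical
  induction s using Finset.induction_on with
  | empty =>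
    rw [Finset.coe_empty, Algebra.adjoin_empty, Finset.card_empty, pow_zero]
    exact Subalgebra.finrank_bot
  | @insert a s ha ih =>
    have hxa : a ∉ Algebra.adjoin F (s : Set L) := by
      have := hind a (Finset.mem_insert_self a s)
      rwa [Finset.erase_insert ha] at this
    have hx2 : a * a ∈ Algebra.adjoin F (s : Set L) := by
      obtain ⟨c, hc'⟩ := hc a
      rw [← pow_two, hc']
      exact Subalgebra.algebraMap_mem _ c
    have h' : ∀ x ∈ s, x ∉ Algebra.adjoin F ((s.erase x : Finset L) : Set L) := by
      intro x hxs hmem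
      exact hind x (Finset.mem_insert_of_mem hxs)
        (Algebra.adjoin_mono
          (Finset.coe_subset.mpr (Finset.erase_subset_erase x (Finset.subset_insert a s))) hmem)
    rw [Finset.coe_insert, adjoin_insert_eq_ext2 (s : Set L) a hx2,
        ext2_finrank hc _ _ hx2 hxa, ih h', Finset.card_insert_of_notMem ha]
    ring

end Dim

section Key
variable {F R : Type*} [Field F] [CommRing R] [Algebra F R] [Nontrivial R]

lemma key_bij (hconic : ∀ x : R, ∃ a : F, x ^ 2 = algebraMap F R a)
    (m : Ideal R) (hm : ∀ x : R, x ∈ m ↔ x ^ 2 = 0)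
    (K : Subalgebra F R) (hKfield : IsField K)
    (hKmax : ∀ K' : Subalgebra F R, IsField K' → K ≤ K' → K = K') :
    Function.Bijective ((Ideal.Quotient.mkₐ F m).comp K.val) := by
  letI : Field K := hKfield.toField
  set ψ := (Ideal.Quotient.mkₐ F m).comp K.val with hψ
  have hψ_apply : ∀ y : K, ψ y = Ideal.Quotient.mk m (y : R) := fun y => rfl
  -- no nonzero nilpotents in a subfield
  have hKnil : ∀ y : R, y ∈ K → y ^ 2 = 0 → y = 0 := by
    intro y hy h
    have hy2 : (⟨y, hy⟩ : K) ^ 2 = 0 := Subtype.ext (by push_cast; exact h)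
    have := pow_eq_zero_iff (n := 2) (by norm_num) |>.mp hy2
    exact congrArg Subtype.val this
  have h1m : (1 : R) ∉ m := by
    intro h
    have := (hm 1).mp h
    rw [one_pow] at this
    exact one_ne_zero this
  haveI : Nontrivial (R ⧸ m) := Ideal.Quotient.nontrivial_iff.mpr (fun h => h1m (h ▸ Submodule.mem_top))
  constructor
  · exact RingHom.injective ψ.toRingHom
  · intro z
    by_contra hz
    push_neg at hz
    obtain ⟨t, rfl⟩ := Ideal.Quotient.mkₐ_surjective F m z
    obtain ⟨a, ha⟩ := hconic t
    have ht2 : t * t ∈ K := by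
      rw [← pow_two, ha]; exact Subalgebra.algebraMap_mem K a
    have hKK' : K ≤ ext2 K t ht2 := le_ext2 K t ht2
    have htK' : t ∈ ext2 K t ht2 := self_mem_ext2 K t ht2
    -- no nonzero nilpotents in the extension
    have hnil : ∀ w ∈ ext2 K t ht2, w ^ 2 = 0 → w = 0 := by
      rintro w ⟨u, hu, v, hv, rfl⟩ hw
      have hmem : u + v * t ∈ m := (hm _).mpr hw
      have hv0 : v = 0 := by
        by_contra hv0
        have hvK : (⟨v, hv⟩ : K) ≠ 0 := fun h => hv0 (congrArg Subtype.val h)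
        obtain ⟨v', hv'⟩ := hKfield.mul_inv_cancel hvK
        have hvv' : v * (v' : R) = 1 := by
          have := congrArg Subtype.val hv'
          push_cast at this
          exact this
        apply hz (-(⟨u, hu⟩ * v'))
        rw [hψ_apply]
        have hmem2 : (v' : R) * (u + v * t) ∈ m := m.mul_mem_left _ hmem
        have heq : (v' : R) * (u + v * t) = (v' : R) * u + t := by
          linear_combination t * hvv'
        rw [heq] at hmem2
        have : ((-(⟨u, hu⟩ * v' : K) : R)) - t ∈ m := by
          have heq2 : ((-(⟨u, hu⟩ * v' : K) : R)) - t = -((v' : R) * u + t) := by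
            push_cast; ring
          rw [heq2]
          exact neg_mem hmem2
        calc Ideal.Quotient.mk m ((-(⟨u, hu⟩ * v' : K) : R))
            = Ideal.Quotient.mk m t := Ideal.Quotient.eq.mpr this
          _ = Ideal.Quotient.mkₐ F m t := rfl
      rw [hv0, zero_mul, add_zero] at hw ⊢
      exact hKnil u hu hw
    -- the extension is a field
    have hK'field : IsField (ext2 K t ht2) := by
      refine ⟨⟨0, 1, fun h => zero_ne_one (α := R) (congrArg Subtype.val h)⟩,
        mul_comm, ?_⟩
      rintro ⟨w, hw⟩ hw0
      obtain ⟨c, hc⟩ := hconic w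
      have hc0 : c ≠ 0 := by
        rintro rfl
        rw [map_zero] at hc
        exact hw0 (Subtype.ext (hnil w hw hc))
      refine ⟨⟨w * algebraMap F R c⁻¹,
        mul_mem hw (Subalgebra.algebraMap_mem _ _)⟩, Subtype.ext ?_⟩
      push_cast
      rw [← mul_assoc, ← pow_two, hc, ← map_mul, mul_inv_cancel₀ hc0, map_one]
    have hKeq : K = ext2 K t ht2 := hKmax _ hK'field hKK'
    have htK : t ∈ K := hKeq ▸ htK'
    exact hz ⟨t, htK⟩ rfl

end Key


theorem stmt_2 (F R : Type*) [Field F] [CharP F 2] [CommRing R] [Algebra F R]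
    [FiniteDimensional F R] [Nontrivial R]
    (hconic : ∀ x : R, ∃ a : F, x ^ 2 = algebraMap F R a)
    -- `m` is the maximal ideal of `R`, with underlying set `{x : R | x ^ 2 = 0}`
    (m : Ideal R) (hm : ∀ x : R, x ∈ m ↔ x ^ 2 = 0)
    -- `K` is a maximal subfield of `R` containing `F`
    (K : Subalgebra F R) (hKfield : IsField K)
    (hKmax : ∀ K' : Subalgebra F R, IsField K' → K ≤ K' → K = K') :
    Nonempty (K ≃ₐ[F] R ⧸ m) ∧
    (∀ K' : Subalgebra F R, IsField K' →
      (∀ K'' : Subalgebra F R, IsField K'' → K' ≤ K'' → K' = K'') →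
      Nonempty (K ≃ₐ[F] K')) ∧
    Module.finrank F K = Module.finrank F (R ⧸ m) ∧
    Module.finrank F K = 2 ^ minRank F (R ⧸ m) ∧
    (∀ x : R, ∃ y : K, x ^ 2 = (y : R) ^ 2) := by
  classical
  have h1m : (1 : R) ∉ m := by
    intro h
    have := (hm 1).mp h
    rw [one_pow] at this
    exact one_ne_zero this
  have hunit : ∀ x : R, x ∉ m → IsUnit x := by
    intro x hx
    obtain ⟨a, ha⟩ := hconic x
    have ha0 : a ≠ 0 := by
      rintro rfl
      exact hx ((hm x).mpr (by rw [ha, map_zero]))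
    exact IsUnit.of_mul_eq_one (x * algebraMap F R a⁻¹)
      (by rw [← mul_assoc, ← pow_two, ha, ← map_mul, mul_inv_cancel₀ ha0, map_one])
  haveI hmmax : m.IsMaximal := Ideal.isMaximal_iff.mpr ⟨h1m, fun J x _ hxm hxJ => by
    obtain ⟨u, rfl⟩ := hunit x hxm
    have := J.mul_mem_left (↑u⁻¹) hxJ
    rwa [Units.inv_mul] at this⟩
  letI : Field (R ⧸ m) := Ideal.Quotient.field m
  haveI : FiniteDimensional F (R ⧸ m) :=
    Module.Finite.of_surjective (Ideal.Quotient.mkₐ F m).toLinearMap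
      (Ideal.Quotient.mkₐ_surjective F m)
  have hconicL : ∀ z : R ⧸ m, ∃ a : F, z ^ 2 = algebraMap F (R ⧸ m) a := by
    intro z
    obtain ⟨t, rfl⟩ := Ideal.Quotient.mkₐ_surjective F m z
    obtain ⟨a, ha⟩ := hconic t
    exact ⟨a, by rw [← map_pow, ha, AlgHom.commutes]⟩
  let e : K ≃ₐ[F] R ⧸ m := AlgEquiv.ofBijective _ (key_bij hconic m hm K hKfield hKmax)
  have h3 : Module.finrank F K = Module.finrank F (R ⧸ m) := e.toLinearEquiv.finrank_eq
  refine ⟨⟨e⟩, ?_, h3, ?_, ?_⟩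
  · intro K' hf hmax'
    exact ⟨e.trans (AlgEquiv.ofBijective _ (key_bij hconic m hm K' hf hmax')).symm⟩
  · rw [h3]
    set S := {n : ℕ | ∃ s : Finset (R ⧸ m), s.card = n ∧
      Algebra.adjoin F (s : Set (R ⧸ m)) = ⊤} with hSdef
    have hmr : minRank F (R ⧸ m) = sInf S := rfl
    have hne : S.Nonempty := by
      refine ⟨(Finset.univ.image (Module.finBasis F (R ⧸ m))).card,
        Finset.univ.image (Module.finBasis F (R ⧸ m)), rfl, ?_⟩
      rw [eq_top_iff]
      intro x _
      have hsp : Submodule.span F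
          (((Finset.univ.image (Module.finBasis F (R ⧸ m))) : Finset _) : Set (R ⧸ m)) = ⊤ := by
        rw [Finset.coe_image, Finset.coe_univ, Set.image_univ]
        exact (Module.finBasis F (R ⧸ m)).span_eq
      exact Algebra.span_le_adjoin F _ (hsp ▸ Submodule.mem_top)
    obtain ⟨s, hcard, hgen⟩ := Nat.sInf_mem hne
    have hmin : ∀ s' : Finset (R ⧸ m), Algebra.adjoin F (s' : Set (R ⧸ m)) = ⊤ →
        sInf S ≤ s'.card := fun s' h => Nat.sInf_le ⟨s', rfl, h⟩
    have hind : ∀ x ∈ s, x ∉ Algebra.adjoin F ((s.erase x : Finset (R ⧸ m)) : Set (R ⧸ m)) := by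
      intro x hx hmem
      have htop : Algebra.adjoin F ((s.erase x : Finset (R ⧸ m)) : Set (R ⧸ m)) = ⊤ := by
        rw [eq_top_iff, ← hgen]
        apply Algebra.adjoin_le
        intro y hy
        rcases eq_or_ne y x with rfl | hne'
        · exact hmem
        · exact Algebra.subset_adjoin (Finset.mem_coe.mpr (Finset.mem_erase.mpr ⟨hne', hy⟩))
      have h1 := hmin _ htop
      rw [Finset.card_erase_of_mem hx] at h1
      have hpos : 0 < s.card := Finset.card_pos.mpr ⟨x, hx⟩
      omega
    have hfin := adjoin_finrank hconicL s hind
    rw [hgen, show Module.finrank F (⊤ : Subalgebra F (R ⧸ m)) = Module.finrank F (R ⧸ m) from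
      LinearEquiv.finrank_eq Subalgebra.topEquiv.toLinearEquiv] at hfin
    rw [hfin, hcard, hmr]
  · intro x
    have h2F : (2 : F) = 0 := by exact_mod_cast CharP.cast_eq_zero F 2
    have h2R : (2 : R) = 0 := by
      rw [← map_ofNat (algebraMap F R) 2, h2F, map_zero]
    refine ⟨e.symm (Ideal.Quotient.mkₐ F m x), ?_⟩
    set y := e.symm (Ideal.Quotient.mkₐ F m x) with hy
    have hey : Ideal.Quotient.mk m (y : R) = Ideal.Quotient.mk m x := e.apply_symm_apply _
    have hsq : ((y : R) - x) ^ 2 = 0 := (hm _).mp (Ideal.Quotient.eq.mp hey)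
    linear_combination hsq + ((y : R) * x - (y : R) ^ 2) * h2R
end

section
/- Let F be a field of characteristic 2 and let R be a finite-dimensional totally singular conic F-algebra. If L is a subfield of R containing F (a subalgebra of R that is a field), then r_L(R) + r_F(L) = r_F(R), where R is regarded as an L-algebra via the inclusion L ⊆ R. -/
open Module Submodule

lemma inv_mem_of_sq {F 𝕂 : Type*} [Field F] [Field 𝕂] [Algebra F 𝕂]
    (hsq : ∀ x : 𝕂, ∃ c : F, x ^ 2 = algebraMap F 𝕂 c) (S : Subalgebra F 𝕂) :
    ∀ y ∈ S, y⁻¹ ∈ S := by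
  intro y hy
  by_cases h0 : y = 0
  · rw [h0, inv_zero]; exact S.zero_mem
  obtain ⟨c, hc⟩ := hsq y
  have hc0 : c ≠ 0 := by
    rintro rfl
    rw [map_zero] at hc
    exact h0 (pow_eq_zero_iff (two_ne_zero) |>.mp hc)
  have hinv : y⁻¹ = y * algebraMap F 𝕂 c⁻¹ := by
    refine inv_eq_of_mul_eq_one_right ?_
    rw [← mul_assoc, ← pow_two, hc, ← map_mul, mul_inv_cancel₀ hc0, map_one]
  rw [hinv]
  exact S.mul_mem hy (S.algebraMap_mem _)

lemma adjoin_le_span_prods {F A : Type*} [Field F] [CommRing A] [Algebra F A] (s : Finset A)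
    (hs : ∀ x ∈ s, ∃ c : F, x ^ 2 = algebraMap F A c) [DecidableEq A] :
    Subalgebra.toSubmodule (Algebra.adjoin F (s : Set A)) ≤
      span F ((s.powerset.image fun T => T.prod id : Finset A) : Set A) := by
  classical
  set P := span F ((s.powerset.image fun T => T.prod id : Finset A) : Set A) with hP
  have hgen : ∀ T : Finset A, T ⊆ s → T.prod id ∈ P := by
    intro T hT
    exact subset_span (by
      simp only [Finset.coe_image, Set.mem_image, Finset.mem_coe, Finset.mem_powerset]
      exact ⟨T, hT, rfl⟩)
  choose cf hcf' using fun x (hx : x ∈ s) => hs x hx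
  have key : ∀ T ∈ s.powerset, ∀ T' ∈ s.powerset, (T.prod id) * (T'.prod id) ∈ P := by
    intro T hT T' hT'
    rw [Finset.mem_powerset] at hT hT'
    have e1 : T.prod id = (T \ T').prod id * (T ∩ T').prod id := by
      rw [← Finset.prod_union (Finset.disjoint_sdiff_inter T T'), Finset.sdiff_union_inter]
    have e2 : T'.prod id = (T' \ T).prod id * (T ∩ T').prod id := by
      rw [Finset.inter_comm, ← Finset.prod_union (Finset.disjoint_sdiff_inter T' T),
        Finset.sdiff_union_inter]
    have e3 : (T.prod id) * (T'.prod id)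
        = ((T \ T') ∪ (T' \ T)).prod id * ((T ∩ T').prod id) ^ 2 := by
      rw [e1, e2, Finset.prod_union (disjoint_sdiff_sdiff)]
      ring
    have e4 : ((T ∩ T').prod id) ^ 2 = algebraMap F A (∏ x ∈ (T ∩ T').attach,
        cf x.1 (hT (Finset.mem_of_mem_inter_left x.2))) := by
      rw [map_prod, ← Finset.prod_pow]
      simp only [id_eq]
      rw [← Finset.prod_attach (T ∩ T') (fun x => x ^ 2)]
      exact Finset.prod_congr rfl fun x _ => hcf' x.1 _
    rw [e3, e4, mul_comm, ← Algebra.smul_def]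
    exact P.smul_mem _ (hgen _ (Finset.union_subset
      ((Finset.sdiff_subset).trans hT) ((Finset.sdiff_subset).trans hT')))
  have hmul : ∀ x ∈ P, ∀ y ∈ P, x * y ∈ P := by
    have : P * P ≤ P := by
      rw [hP, span_mul_span]
      refine span_le.mpr ?_
      rintro z ⟨p, hp, q, hq, rfl⟩
      simp only [Finset.coe_image, Set.mem_image, Finset.mem_coe] at hp hq
      obtain ⟨T, hT, rfl⟩ := hp
      obtain ⟨T', hT', rfl⟩ := hq
      exact key T (Finset.mem_powerset.mpr (Finset.mem_powerset.mp hT))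
        T' (Finset.mem_powerset.mpr (Finset.mem_powerset.mp hT'))
    intro x hx y hy
    exact this (mul_mem_mul hx hy)
  let S : Subalgebra F A :=
    { carrier := (P : Set A)
      mul_mem' := fun hx hy => hmul _ hx _ hy
      one_mem' := by simpa using hgen ∅ (Finset.empty_subset s)
      add_mem' := fun hx hy => P.add_mem hx hy
      zero_mem' := P.zero_mem
      algebraMap_mem' := fun c => by
        rw [Algebra.algebraMap_eq_smul_one]
        exact P.smul_mem _ (by simpa using hgen ∅ (Finset.empty_subset s)) }
  have hle : Algebra.adjoin F (s : Set A) ≤ S := by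
    refine Algebra.adjoin_le ?_
    intro x hx
    show x ∈ P
    simpa using hgen {x} (by simpa using hx)
  exact fun x hx => hle hx

-- degree-2 lemma
lemma finrank_adjoin_sq (E : Type*) {𝕂 : Type*} [Field E] [Field 𝕂] [Algebra E 𝕂]
    (x : 𝕂) (c : E) (hc : x ^ 2 = algebraMap E 𝕂 c)
    (hx : x ∉ (⊥ : Subalgebra E 𝕂)) :
    finrank E ↥(IntermediateField.adjoin E {x}) = 2 := by
  have haev : (Polynomial.aeval x) (Polynomial.X ^ 2 - Polynomial.C c) = 0 := by
    simp [hc]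
  have hint : IsIntegral E x :=
    ⟨Polynomial.X ^ 2 - Polynomial.C c, Polynomial.monic_X_pow_sub_C c (by norm_num), haev⟩
  rw [IntermediateField.adjoin.finrank hint]
  have hdvd := minpoly.dvd E x haev
  have hle : (minpoly E x).natDegree ≤ 2 := by
    have := Polynomial.natDegree_le_of_dvd hdvd (Polynomial.monic_X_pow_sub_C c
      (two_ne_zero)).ne_zero
    simpa [Polynomial.natDegree_X_pow_sub_C] using this
  have hpos : 0 < (minpoly E x).natDegree := minpoly.natDegree_pos hint
  have hne1 : (minpoly E x).natDegree ≠ 1 := by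
    intro h1
    have hmon := minpoly.monic hint
    have heq := hmon.eq_X_add_C h1
    have : x + algebraMap E 𝕂 ((minpoly E x).coeff 0) = 0 := by
      have := minpoly.aeval E x
      rw [heq] at this
      simpa using this
    have : x = algebraMap E 𝕂 (-(minpoly E x).coeff 0) := by
      rw [map_neg]; linear_combination this
    exact hx (by rw [Algebra.mem_bot]; exact ⟨_, this.symm⟩)
  omega

universe uK in
lemma ext_aux (𝕂 : Type uK) [Field 𝕂] : ∀ (n : ℕ) (E : Type uK) [Field E] [Algebra E 𝕂]
    [FiniteDimensional E 𝕂], finrank E 𝕂 = n →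
    (∀ x : 𝕂, ∃ c : E, x ^ 2 = algebraMap E 𝕂 c) →
    ∀ t : Finset 𝕂, Algebra.adjoin E (t : Set 𝕂) = ⊤ →
    ∃ t' : Finset 𝕂, t' ⊆ t ∧ Algebra.adjoin E (t' : Set 𝕂) = ⊤ ∧
      finrank E 𝕂 = 2 ^ t'.card := by
  intro n
  induction n using Nat.strong_induction_on with
  | _ n IH =>
    intro E _ _ _ hn hsq t ht
    classical
    by_cases hbot : ∀ x ∈ t, x ∈ (⊥ : Subalgebra E 𝕂)
    · have h1 : (⊥ : Subalgebra E 𝕂) = ⊤ := by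
        have : Algebra.adjoin E (t : Set 𝕂) ≤ ⊥ := Algebra.adjoin_le hbot
        rw [ht] at this
        exact le_antisymm le_top this
      refine ⟨∅, Finset.empty_subset t, by simpa [Algebra.adjoin_empty] using h1, ?_⟩
      simpa using (Subalgebra.bot_eq_top_iff_finrank_eq_one.mp h1)
    · push_neg at hbot
      obtain ⟨x, hxt, hxB⟩ := hbot
      obtain ⟨c, hc⟩ := hsq x
      set E' := IntermediateField.adjoin E {x} with hE'
      have hdeg : finrank E ↥E' = 2 := finrank_adjoin_sq E x c hc hxB
      have hrank : finrank E 𝕂 = 2 * finrank ↥E' 𝕂 := by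
        rw [← finrank_mul_finrank E ↥E' 𝕂, hdeg]
      have hpos' : 0 < finrank ↥E' 𝕂 := finrank_pos
      -- squares over E'
      have hsq' : ∀ y : 𝕂, ∃ c' : ↥E', y ^ 2 = algebraMap ↥E' 𝕂 c' := by
        intro y
        obtain ⟨cy, hcy⟩ := hsq y
        exact ⟨⟨algebraMap E 𝕂 cy, E'.algebraMap_mem cy⟩, hcy⟩
      -- generation over E'
      have ht' : Algebra.adjoin ↥E' ((t.erase x : Finset 𝕂) : Set 𝕂) = ⊤ := by
        have hle : Algebra.adjoin E (t : Set 𝕂) ≤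
            Subalgebra.restrictScalars E (Algebra.adjoin ↥E' ((t.erase x : Finset 𝕂) : Set 𝕂)) := by
          refine Algebra.adjoin_le ?_
          intro y hy
          rw [Finset.mem_coe] at hy
          rw [SetLike.mem_coe, Subalgebra.mem_restrictScalars]
          by_cases hyx : y = x
          · subst hyx
            have hmem := Subalgebra.algebraMap_mem
              (Algebra.adjoin ↥E' (((t.erase y) : Finset 𝕂) : Set 𝕂))
              ⟨y, IntermediateField.mem_adjoin_simple_self E y⟩
            rwa [IntermediateField.algebraMap_apply] at hmem
          · exact Algebra.subset_adjoin (by simp [Finset.mem_erase, hyx, hy])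
        rw [ht] at hle
        rw [eq_top_iff]
        intro y _
        exact (Subalgebra.mem_restrictScalars E).mp (hle trivial)
      obtain ⟨t'', ht''sub, ht''top, ht''rk⟩ :=
        IH (finrank ↥E' 𝕂) (by omega) ↥E' rfl hsq' (t.erase x) ht'
      refine ⟨insert x t'', ?_, ?_, ?_⟩
      · exact Finset.insert_subset hxt (ht''sub.trans (Finset.erase_subset x t))
      · -- generation over E
        rw [eq_top_iff]
        intro y _
        have hy : y ∈ Algebra.adjoin ↥E' ((t'' : Finset 𝕂) : Set 𝕂) := by
          rw [ht''top]; trivial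
        -- E'-scalar elements are in the E-adjoin of {x}
        have hEx : ∀ c' : ↥E', (c' : 𝕂) ∈ Algebra.adjoin E ((insert x t'' : Finset 𝕂) : Set 𝕂) := by
          intro c'
          have hinvc : ∀ z ∈ Algebra.adjoin E ({x} : Set 𝕂), z⁻¹ ∈ Algebra.adjoin E ({x} : Set 𝕂) :=
            inv_mem_of_sq hsq _
          let T : IntermediateField E 𝕂 :=
            Subalgebra.toIntermediateField (Algebra.adjoin E ({x} : Set 𝕂)) hinvc
          have hle : E' ≤ T := by
            rw [hE', IntermediateField.adjoin_le_iff]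
            intro z hz
            rw [Set.mem_singleton_iff] at hz
            subst hz
            exact Algebra.subset_adjoin rfl
          have : (c' : 𝕂) ∈ Algebra.adjoin E ({x} : Set 𝕂) := hle c'.2
          refine Algebra.adjoin_mono ?_ this
          intro z hz
          rw [Set.mem_singleton_iff] at hz
          subst hz
          simp
        refine Algebra.adjoin_induction ?_ ?_ ?_ ?_ hy
        · intro z hz
          exact Algebra.subset_adjoin (by
            rw [Finset.coe_insert]
            exact Set.mem_insert_of_mem _ hz)
        · intro r
          exact hEx r
        · intro a b _ _ pa pb
          exact Subalgebra.add_mem _ pa pb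
        · intro a b _ _ pa pb
          exact Subalgebra.mul_mem _ pa pb
      · rw [hrank, ht''rk, Finset.card_insert_of_notMem
          (fun hmem => (Finset.notMem_erase x t) (ht''sub hmem)), pow_succ]
        ring

-- generating finset exists
lemma gen_exists (F R : Type*) [CommRing F] [CommRing R] [Algebra F R] [Module.Finite F R] :
    ∃ s : Finset R, Algebra.adjoin F (s : Set R) = ⊤ := by
  classical
  obtain ⟨n, f, hf⟩ := Module.Finite.exists_fin (R := F) (M := R)
  refine ⟨(Finset.univ : Finset (Fin n)).image f, ?_⟩
  rw [eq_top_iff]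
  intro y _
  have hy : y ∈ span F (Set.range f) := by rw [hf]; trivial
  have : span F (Set.range f) ≤ Subalgebra.toSubmodule (Algebra.adjoin F
      (((Finset.univ : Finset (Fin n)).image f : Finset R) : Set R)) := by
    rw [span_le]
    intro z hz
    exact Algebra.subset_adjoin (by simpa using hz)
  exact this hy

lemma ext_exists (F : Type*) (𝕂 : Type*) [Field F] [Field 𝕂] [Algebra F 𝕂]
    [FiniteDimensional F 𝕂] (hsq : ∀ x : 𝕂, ∃ c : F, x ^ 2 = algebraMap F 𝕂 c)
    (t : Finset 𝕂) (ht : Algebra.adjoin F (t : Set 𝕂) = ⊤) :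
    ∃ t' : Finset 𝕂, t' ⊆ t ∧ Algebra.adjoin F (t' : Set 𝕂) = ⊤ ∧
      finrank F 𝕂 = 2 ^ t'.card := by
  set E : IntermediateField F 𝕂 := ⊥ with hE
  have hsq0 : ∀ x : 𝕂, ∃ c : ↥E, x ^ 2 = algebraMap ↥E 𝕂 c := by
    intro x
    obtain ⟨c, hc⟩ := hsq x
    exact ⟨⟨algebraMap F 𝕂 c, E.algebraMap_mem c⟩, by rwa [IntermediateField.algebraMap_apply]⟩
  have ht0 : Algebra.adjoin ↥E (t : Set 𝕂) = ⊤ := by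
    have hle : Algebra.adjoin F (t : Set 𝕂) ≤
        Subalgebra.restrictScalars F (Algebra.adjoin ↥E (t : Set 𝕂)) :=
      Algebra.adjoin_le fun y hy => (Subalgebra.mem_restrictScalars F).mpr
        (Algebra.subset_adjoin hy)
    rw [ht] at hle
    rw [eq_top_iff]
    intro y _
    exact (Subalgebra.mem_restrictScalars F).mp (hle trivial)
  have hfr : finrank ↥E 𝕂 = finrank F 𝕂 := by
    have := finrank_mul_finrank F ↥E 𝕂
    rw [IntermediateField.finrank_bot] at this
    simpa using this
  obtain ⟨t', hsub, htop, hrk⟩ := ext_aux 𝕂 (finrank ↥E 𝕂) ↥E rfl hsq0 t ht0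
  refine ⟨t', hsub, ?_, by rw [← hfr, hrk]⟩
  rw [eq_top_iff]
  intro y _
  have hy : y ∈ Algebra.adjoin ↥E (t' : Set 𝕂) := by rw [htop]; trivial
  refine Algebra.adjoin_induction ?_ ?_ ?_ ?_ hy
  · exact fun z hz => Algebra.subset_adjoin hz
  · intro r
    have : (algebraMap ↥E 𝕂 r : 𝕂) ∈ Set.range (algebraMap F 𝕂) := by
      rw [IntermediateField.algebraMap_apply]
      exact IntermediateField.mem_bot.mp r.2
    obtain ⟨c, hc⟩ := this
    rw [← hc]
    exact Subalgebra.algebraMap_mem _ c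
  · exact fun a b _ _ pa pb => Subalgebra.add_mem _ pa pb
  · exact fun a b _ _ pa pb => Subalgebra.mul_mem _ pa pb


theorem rank_formula (F R 𝕂 : Type*) [Field F] [CommRing R] [Algebra F R]
    [FiniteDimensional F R] [Field 𝕂] [Algebra F 𝕂] [FiniteDimensional F 𝕂]
    (π : R →ₐ[F] 𝕂) (hπ : Function.Surjective π)
    (hker : ∀ x : R, π x = 0 ↔ x ^ 2 = 0)
    (hconic : ∀ x : R, ∃ a : F, x ^ 2 = algebraMap F R a)
    (e : ℕ) (he : finrank F 𝕂 = 2 ^ e) :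
    minRank F R = e + sInf {n : ℕ | ∃ s : Finset R, s.card = n ∧
      Ideal.span (s : Set R) = nilradical R} := by
  classical
  haveI hnontriv : Nontrivial R :=
    ⟨1, 0, fun h => one_ne_zero (α := 𝕂) (by rw [← map_one π, h, map_zero])⟩
  haveI : IsNoetherianRing R := isNoetherian_of_tower F inferInstance
  set Sμ := {n : ℕ | ∃ s : Finset R, s.card = n ∧ Ideal.span (s : Set R) = nilradical R} with hSμ
  set μ := sInf Sμ with hμ
  -- nilradical = square-zero elements
  have hNil : ∀ x : R, x ∈ nilradical R ↔ x ^ 2 = 0 := by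
    intro x
    constructor
    · rintro ⟨k, hk⟩
      obtain ⟨a, ha⟩ := hconic x
      rcases Nat.eq_zero_or_pos k with rfl | hkpos
      · rw [pow_zero] at hk; exact absurd hk one_ne_zero
      have h2 : (x ^ 2) ^ k = 0 := by
        rw [← pow_mul, mul_comm, pow_mul, hk, zero_pow (by omega : 2 ≠ 0)]
      rw [ha, ← map_pow] at h2
      have ha0 : a ^ k = 0 := by
        have hinj : Function.Injective (algebraMap F R) := (algebraMap F R).injective
        rw [← map_zero (algebraMap F R)] at h2
        exact hinj h2
      have : a = 0 := pow_eq_zero_iff'.mp ha0 |>.1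
      rw [ha, this, map_zero]
    · intro h; exact ⟨2, h⟩
  have hμne : Sμ.Nonempty := by
    obtain ⟨s, hs⟩ := IsNoetherian.noetherian (nilradical R)
    exact ⟨s.card, s, rfl, hs⟩
  have hsq𝕂 : ∀ y : 𝕂, ∃ c : F, y ^ 2 = algebraMap F 𝕂 c := by
    intro y
    obtain ⟨x, rfl⟩ := hπ y
    obtain ⟨a, ha⟩ := hconic x
    exact ⟨a, by rw [← map_pow, ha, AlgHom.commutes]⟩
  have hSgen_ne : {n : ℕ | ∃ s : Finset R, s.card = n ∧
      Algebra.adjoin F (s : Set R) = ⊤}.Nonempty := by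
    obtain ⟨s, hs⟩ := gen_exists F R
    exact ⟨s.card, s, rfl, hs⟩
  apply le_antisymm
  -- upper bound
  · obtain ⟨t0, ht0⟩ := gen_exists F 𝕂
    obtain ⟨t', _, ht'top, ht'rk⟩ := ext_exists F 𝕂 hsq𝕂 t0 ht0
    have ht'card : t'.card = e := by
      have hpow : (2:ℕ) ^ t'.card = 2 ^ e := by rw [← ht'rk, he]
      exact Nat.pow_right_injective le_rfl hpow
    set u := t'.image (Function.surjInv hπ) with hu
    obtain ⟨zfin, hzcard, hzspan⟩ : μ ∈ Sμ := Nat.sInf_mem hμne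
    set B := Algebra.adjoin F ((u ∪ zfin : Finset R) : Set R) with hB
    have hmapB : Subalgebra.map π B = ⊤ := by
      rw [hB, AlgHom.map_adjoin, eq_top_iff]
      have ht'sub : (t' : Set 𝕂) ⊆ ⇑π '' ((u ∪ zfin : Finset R) : Set R) := by
        intro y hy
        refine ⟨Function.surjInv hπ y, ?_, Function.surjInv_eq hπ y⟩
        simp only [Finset.coe_union, Set.mem_union]
        exact Or.inl (Finset.mem_coe.mpr (Finset.mem_image_of_mem _ hy))
      calc (⊤ : Subalgebra F 𝕂) = Algebra.adjoin F (t' : Set 𝕂) := ht'top.symm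
      _ ≤ _ := Algebra.adjoin_mono ht'sub
    have hRBN : ∀ r : R, ∃ b ∈ B, r - b ∈ nilradical R := by
      intro r
      have hmem : π r ∈ Subalgebra.map π B := by rw [hmapB]; trivial
      obtain ⟨b, hbB, hb⟩ := hmem
      have hb' : π b = π r := hb
      refine ⟨b, hbB, ?_⟩
      rw [hNil, ← hker, map_sub, hb', sub_self]
    have hzB : ∀ w ∈ zfin, w ∈ B := fun w hw =>
      Algebra.subset_adjoin (by simp [hw])
    have hznil : ∀ w ∈ zfin, w ∈ nilradical R := fun w hw => by
      rw [← hzspan]; exact Ideal.subset_span hw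
    have hstep : ∀ k : ℕ, ∀ x ∈ ((nilradical R) ^ (k + 1) : Ideal R),
        x ∈ Subalgebra.toSubmodule B ⊔
          Submodule.restrictScalars F (((nilradical R) ^ (k + 2) : Ideal R) : Submodule R R) := by
      intro k
      induction k with
      | zero =>
        intro x hx
        rw [pow_one, ← hzspan] at hx
        rw [show Ideal.span (zfin : Set R) = span R (zfin : Set R) from rfl,
          mem_span_finset] at hx
        obtain ⟨f, -, hf⟩ := hx
        rw [← hf]
        refine Submodule.sum_mem _ ?_
        intro i hi
        obtain ⟨b, hbB, hbn⟩ := hRBN (f i)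
        have heq : f i • i = b * i + (f i - b) * i := by rw [smul_eq_mul]; ring
        rw [heq]
        refine Submodule.add_mem _ (mem_sup_left ?_) (mem_sup_right ?_)
        · exact Subalgebra.mul_mem B hbB (hzB i hi)
        · show (f i - b) * i ∈ ((nilradical R) ^ 2 : Ideal R)
          rw [pow_two]
          exact Ideal.mul_mem_mul hbn (hznil i hi)
      | succ k IH =>
        intro x hx
        rw [pow_succ] at hx
        refine Submodule.mul_induction_on hx ?_ ?_
        · intro a ha c hc
          rw [← hzspan, show Ideal.span (zfin : Set R) = span R (zfin : Set R) from rfl,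
            mem_span_finset] at hc
          obtain ⟨f, -, hf⟩ := hc
          rw [← hf, Finset.mul_sum]
          refine Submodule.sum_mem _ ?_
          intro i hi
          have haf : a * f i ∈ ((nilradical R) ^ (k + 1) : Ideal R) :=
            Ideal.mul_mem_right _ _ ha
          obtain ⟨β, hβ, γ, hγ, hbg⟩ := mem_sup.mp (IH _ haf)
          have heq : a * (f i • i) = β * i + γ * i := by
            rw [smul_eq_mul, ← mul_assoc, ← hbg]; ring
          rw [heq]
          refine Submodule.add_mem _ (mem_sup_left ?_) (mem_sup_right ?_)
          · exact Subalgebra.mul_mem B hβ (hzB i hi)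
          · show γ * i ∈ ((nilradical R) ^ (k + 3) : Ideal R)
            rw [pow_succ]
            exact Ideal.mul_mem_mul ((Submodule.restrictScalars_mem F _ _).mp hγ) (hznil i hi)
        · intro a b pa pb
          exact Submodule.add_mem _ pa pb
    have hchain : ∀ k : ℕ, ∀ x ∈ nilradical R,
        x ∈ Subalgebra.toSubmodule B ⊔
          Submodule.restrictScalars F (((nilradical R) ^ (k + 1) : Ideal R) : Submodule R R) := by
      intro k
      induction k with
      | zero =>
        intro x hx
        exact mem_sup_right (by rwa [pow_one])
      | succ k IH =>
        intro x hx
        obtain ⟨β, hβ, γ, hγ, rfl⟩ := mem_sup.mp (IH x hx)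
        have hγ' := hstep k γ ((Submodule.restrictScalars_mem F _ _).mp hγ)
        obtain ⟨β', hb2, γ', hg2, hsum⟩ := mem_sup.mp hγ'
        rw [← hsum, ← add_assoc]
        exact Submodule.add_mem _ (Submodule.add_mem _ (mem_sup_left hβ) (mem_sup_left hb2))
          (mem_sup_right hg2)
    obtain ⟨N, hN⟩ := IsNoetherianRing.isNilpotent_nilradical R
    have hNpos : N ≠ 0 := by
      rintro rfl
      rw [pow_zero, Ideal.one_eq_top] at hN
      have h1 : (1 : R) ∈ (⊤ : Ideal R) := trivial
      rw [hN] at h1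
      exact one_ne_zero ((Ideal.mem_bot).mp h1)
    have hNilB : ∀ x ∈ nilradical R, x ∈ B := by
      intro x hx
      have := hchain (N - 1) x hx
      rw [show N - 1 + 1 = N from by omega, hN] at this
      obtain ⟨β, hβ, γ, hγ, rfl⟩ := mem_sup.mp this
      have : γ = 0 := (Ideal.mem_bot).mp ((Submodule.restrictScalars_mem F _ _).mp hγ)
      rw [this, add_zero]
      exact hβ
    have hBtop : B = ⊤ := by
      rw [eq_top_iff]
      intro r _
      obtain ⟨b, hbB, hnb⟩ := hRBN r
      have heq : r = b + (r - b) := by ring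
      rw [heq]
      exact B.add_mem hbB (hNilB _ hnb)
    have hucard : u.card ≤ e := by rw [hu, ← ht'card]; exact Finset.card_image_le
    refine le_trans (Nat.sInf_le ⟨u ∪ zfin, rfl, hBtop⟩) ?_
    calc (u ∪ zfin).card ≤ u.card + zfin.card := Finset.card_union_le u zfin
    _ ≤ e + μ := by omega
  -- lower bound
  · obtain ⟨s, hscard, hsgen⟩ : minRank F R ∈ {n : ℕ | ∃ s : Finset R, s.card = n ∧
        Algebra.adjoin F (s : Set R) = ⊤} := Nat.sInf_mem hSgen_ne
    have htimg : Algebra.adjoin F ((s.image π : Finset 𝕂) : Set 𝕂) = ⊤ := by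
      rw [Finset.coe_image, ← AlgHom.map_adjoin, hsgen, Algebra.map_top]
      exact (AlgHom.range_eq_top π).mpr hπ
    obtain ⟨t', ht'sub, ht'top, ht'rk⟩ := ext_exists F 𝕂 hsq𝕂 (s.image π) htimg
    have ht'card : t'.card = e := by
      have hpow : (2:ℕ) ^ t'.card = 2 ^ e := by rw [← ht'rk, he]
      exact Nat.pow_right_injective le_rfl hpow
    set sec : 𝕂 → R := fun y => if h : ∃ v ∈ s, π v = y then h.choose else 0 with hsecdef
    have hsecex : ∀ y ∈ t', ∃ v ∈ s, π v = y := by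
      intro y hy
      have := ht'sub hy
      rw [Finset.mem_image] at this
      obtain ⟨v, hv, hveq⟩ := this
      exact ⟨v, hv, hveq⟩
    have hsec1 : ∀ y ∈ t', sec y ∈ s := by
      intro y hy
      have h := hsecex y hy
      simp only [hsecdef, dif_pos h]
      exact h.choose_spec.1
    have hsec2 : ∀ y ∈ t', π (sec y) = y := by
      intro y hy
      have h := hsecex y hy
      simp only [hsecdef, dif_pos h]
      exact h.choose_spec.2
    set s₀ := t'.image sec with hs₀
    have hs₀sub : s₀ ⊆ s := by
      intro v hv
      rw [hs₀, Finset.mem_image] at hv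
      obtain ⟨y, hy, rfl⟩ := hv
      exact hsec1 y hy
    have hinj : Set.InjOn sec (t' : Set 𝕂) := fun y hy y' hy' hEq => by
      rw [← hsec2 y hy, ← hsec2 y' hy', hEq]
    have hs₀card : s₀.card = e := by
      rw [hs₀, Finset.card_image_of_injOn hinj, ht'card]
    have himg : ⇑π '' (s₀ : Set R) = (t' : Set 𝕂) := by
      ext y
      constructor
      · rintro ⟨v, hv, rfl⟩
        rw [hs₀] at hv
        simp only [Finset.coe_image, Set.mem_image, Finset.mem_coe] at hv
        obtain ⟨y', hy', rfl⟩ := hv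
        rw [hsec2 y' hy']
        exact hy'
      · intro hy
        exact ⟨sec y, by
          rw [hs₀]
          simp only [Finset.coe_image, Set.mem_image, Finset.mem_coe]
          exact ⟨y, hy, rfl⟩, hsec2 y hy⟩
    have hmapA : Subalgebra.map π (Algebra.adjoin F (s₀ : Set R)) = ⊤ := by
      rw [AlgHom.map_adjoin, himg, ht'top]
    have hbsel : ∀ v : R, ∃ b, b ∈ Algebra.adjoin F (s₀ : Set R) ∧ π b = π v := by
      intro v
      have hmem : π v ∈ Subalgebra.map π (Algebra.adjoin F (s₀ : Set R)) := by
        rw [hmapA]; trivial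
      obtain ⟨b, hb, hb2⟩ := hmem
      exact ⟨b, hb, hb2⟩
    choose bv hbv1 hbv2 using hbsel
    set zset := (s \ s₀).image (fun v => v - bv v) with hz
    have hznil : ∀ w ∈ zset, w ∈ nilradical R := by
      intro w hw
      rw [hz, Finset.mem_image] at hw
      obtain ⟨v, hv, rfl⟩ := hw
      rw [hNil, ← hker, map_sub, hbv2, sub_self]
    have hJnil : Ideal.span (zset : Set R) ≤ nilradical R :=
      Ideal.span_le.mpr fun w hw => hznil w hw
    have hBtop : Algebra.adjoin F ((s₀ ∪ zset : Finset R) : Set R) = ⊤ := by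
      rw [eq_top_iff, ← hsgen]
      refine Algebra.adjoin_le ?_
      intro v hv
      rw [Finset.mem_coe] at hv
      by_cases hv0 : v ∈ s₀
      · exact Algebra.subset_adjoin (by simp [hv0])
      · have hvz : v - bv v ∈ zset := by
          rw [hz]
          exact Finset.mem_image_of_mem _ (Finset.mem_sdiff.mpr ⟨hv, hv0⟩)
        have h1 : v - bv v ∈ Algebra.adjoin F ((s₀ ∪ zset : Finset R) : Set R) :=
          Algebra.subset_adjoin (by
            simp only [Finset.coe_union, Set.mem_union, Finset.mem_coe]
            exact Or.inr hvz)
        have h2 : bv v ∈ Algebra.adjoin F ((s₀ ∪ zset : Finset R) : Set R) :=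
          Algebra.adjoin_mono (by
            rw [Finset.coe_union]; exact Set.subset_union_left) (hbv1 v)
        have heq : v = (v - bv v) + bv v := by ring
        rw [heq]
        exact Subalgebra.add_mem _ h1 h2
    set V := span F ((s₀.powerset.image fun T => T.prod id : Finset R) : Set R) with hV
    have hVJ : ∀ x : R, x ∈ V ⊔ Submodule.restrictScalars F
        ((Ideal.span (zset : Set R) : Ideal R) : Submodule R R) := by
      intro x
      have hx : x ∈ Subalgebra.toSubmodule (Algebra.adjoin F ((s₀ ∪ zset : Finset R) : Set R)) := by
        rw [hBtop]; trivial
      have h1 := adjoin_le_span_prods (s₀ ∪ zset) (fun w _ => hconic w) hx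
      refine span_le.mpr ?_ h1
      rintro p hp
      simp only [Finset.coe_image, Set.mem_image, Finset.mem_coe, Finset.mem_powerset] at hp
      obtain ⟨T, hT, rfl⟩ := hp
      by_cases hTs : T ⊆ s₀
      · refine mem_sup_left (subset_span ?_)
        simp only [Finset.coe_image, Set.mem_image, Finset.mem_coe, Finset.mem_powerset]
        exact ⟨T, hTs, rfl⟩
      · obtain ⟨w, hwT, hws⟩ := Finset.not_subset.mp hTs
        have hwz : w ∈ zset := by
          have := hT hwT
          rw [Finset.mem_union] at this
          tauto
        refine mem_sup_right ?_
        show T.prod id ∈ Ideal.span (zset : Set R)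
        rw [← Finset.mul_prod_erase T id hwT]
        exact Ideal.mul_mem_right _ _ (Ideal.subset_span hwz)
    set g : ↥V →ₗ[F] 𝕂 := π.toLinearMap.comp V.subtype with hg
    have hrange : LinearMap.range g = ⊤ := by
      rw [hg, LinearMap.range_comp, Submodule.range_subtype, eq_top_iff]
      intro y _
      have h1 : y ∈ Subalgebra.toSubmodule (Algebra.adjoin F (t' : Set 𝕂)) := by
        rw [ht'top]; trivial
      have h2 := adjoin_le_span_prods t' (fun w _ => hsq𝕂 w) h1
      refine span_le.mpr ?_ h2
      rintro p hp
      simp only [Finset.coe_image, Set.mem_image, Finset.mem_coe, Finset.mem_powerset] at hp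
      obtain ⟨T', hT', rfl⟩ := hp
      refine Submodule.mem_map.mpr ⟨(T'.image sec).prod id, ?_, ?_⟩
      · refine subset_span ?_
        simp only [Finset.coe_image, Set.mem_image, Finset.mem_coe, Finset.mem_powerset]
        exact ⟨T'.image sec, by
          rw [hs₀]; exact Finset.image_subset_image hT', rfl⟩
      · have hpi : (T'.image sec).prod id = ∏ y ∈ T', sec y :=
          Finset.prod_image (fun a ha b hb hEq => hinj (hT' ha) (hT' hb) hEq)
        rw [hpi]
        show π (∏ y ∈ T', sec y) = T'.prod id
        rw [map_prod]
        exact Finset.prod_congr rfl fun y hy => hsec2 y (hT' hy)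
    have hVrank : finrank F ↥V = 2 ^ e := by
      apply le_antisymm
      · calc finrank F ↥V ≤ (s₀.powerset.image fun T => T.prod id).card :=
              finrank_span_finset_le_card _
        _ ≤ s₀.powerset.card := Finset.card_image_le
        _ = 2 ^ e := by rw [Finset.card_powerset, hs₀card]
      · have hle := LinearMap.finrank_range_le g
        rw [hrange, finrank_top] at hle
        rw [← he]
        exact hle
    have hginj : Function.Injective g := by
      have hfr : finrank F ↥V = finrank F 𝕂 := by rw [hVrank, he]
      exact (LinearMap.injective_iff_surjective_of_finrank_eq_finrank hfr).mpr
        (LinearMap.range_eq_top.mp hrange)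
    have hnilJ : nilradical R ≤ Ideal.span (zset : Set R) := by
      intro x hx
      obtain ⟨v, hvV, j, hj, hxe⟩ := mem_sup.mp (hVJ x)
      have hj' : j ∈ Ideal.span (zset : Set R) := (Submodule.restrictScalars_mem F _ _).mp hj
      have hπj : π j = 0 := by
        rw [hker, ← hNil]
        exact hJnil hj'
      have hπx : π x = 0 := by
        rw [hker, ← hNil]
        exact hx
      have hπv : π v = 0 := by
        have : v = x - j := by rw [← hxe]; ring
        rw [this, map_sub, hπx, hπj, sub_zero]
      have hg0 : g ⟨v, hvV⟩ = g 0 := by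
        rw [map_zero]
        exact hπv
      have hv0 : v = 0 := by
        have := hginj hg0
        exact Subtype.ext_iff.mp this
      rw [← hxe, hv0, zero_add]
      exact hj'
    have hJeq : Ideal.span (zset : Set R) = nilradical R := le_antisymm hJnil hnilJ
    have hμle : μ ≤ zset.card := Nat.sInf_le ⟨zset, rfl, hJeq⟩
    have hzcard : zset.card ≤ s.card - s₀.card := by
      rw [← Finset.card_sdiff_of_subset hs₀sub]
      exact Finset.card_image_le
    have hs₀les : s₀.card ≤ s.card := Finset.card_le_card hs₀sub
    omega

lemma mem_nilradical_iff_sq {F R : Type*} [Field F] [CommRing R] [Algebra F R] [Nontrivial R]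
    (hconic : ∀ x : R, ∃ a : F, x ^ 2 = algebraMap F R a) (x : R) :
    x ∈ nilradical R ↔ x ^ 2 = 0 := by
  constructor
  · rintro ⟨k, hk⟩
    obtain ⟨a, ha⟩ := hconic x
    rcases Nat.eq_zero_or_pos k with rfl | hkpos
    · rw [pow_zero] at hk; exact absurd hk one_ne_zero
    have h2 : (x ^ 2) ^ k = 0 := by
      rw [← pow_mul, mul_comm, pow_mul, hk, zero_pow (by omega : 2 ≠ 0)]
    rw [ha, ← map_pow] at h2
    have ha0 : a ^ k = 0 := by
      have hinj : Function.Injective (algebraMap F R) := (algebraMap F R).injective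
      rw [← map_zero (algebraMap F R)] at h2
      exact hinj h2
    have : a = 0 := (pow_eq_zero_iff'.mp ha0).1
    rw [ha, this, map_zero]
  · intro h; exact ⟨2, h⟩

theorem stmt_3 (F R : Type*) [Field F] [CharP F 2] [CommRing R] [Algebra F R]
    [FiniteDimensional F R]
    (hconic : ∀ x : R, ∃ a : F, x ^ 2 = algebraMap F R a)
    -- `L` is a subfield of `R` containing `F`
    (L : Subalgebra F R) (hLfield : IsField L) :
    minRank L R + minRank F L = minRank F R := by
  classical
  letI : Field ↥L := hLfield.toField
  haveI : Nontrivial R := by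
    refine ⟨1, 0, fun h => one_ne_zero (α := ↥L) (Subtype.ext ?_)⟩
    simpa using h
  haveI : IsNoetherianRing R := isNoetherian_of_tower F inferInstance
  have hNil : ∀ x : R, x ∈ nilradical R ↔ x ^ 2 = 0 := mem_nilradical_iff_sq hconic
  set m : Ideal R := nilradical R with hm
  have hmax : m.IsMaximal := by
    rw [Ideal.isMaximal_iff]
    constructor
    · intro h1
      have := (hNil 1).mp h1
      simpa using this
    · intro I x _ hxm hxI
      obtain ⟨a, ha⟩ := hconic x
      have ha0 : a ≠ 0 := by
        rintro rfl
        exact hxm ((hNil x).mpr (by rw [ha, map_zero]))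
      have hx1 : x * (x * algebraMap F R a⁻¹) = 1 := by
        rw [← mul_assoc, ← pow_two, ha, ← map_mul, mul_inv_cancel₀ ha0, map_one]
      rw [← hx1]
      exact Ideal.mul_mem_right _ _ hxI
  haveI := hmax
  letI : Field (R ⧸ m) := Ideal.Quotient.field m
  haveI hFD1 : FiniteDimensional F (R ⧸ m) :=
    Module.Finite.of_surjective (Ideal.Quotient.mkₐ F m).toLinearMap
      (Ideal.Quotient.mkₐ_surjective F m)
  haveI : FiniteDimensional ↥L R := Module.Finite.of_restrictScalars_finite F ↥L R
  haveI hFD2 : FiniteDimensional ↥L (R ⧸ m) :=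
    Module.Finite.of_surjective (Ideal.Quotient.mkₐ ↥L m).toLinearMap
      (Ideal.Quotient.mkₐ_surjective ↥L m)
  -- the quotient maps
  have hπF : Function.Surjective (Ideal.Quotient.mkₐ F m) := Ideal.Quotient.mkₐ_surjective F m
  have hπL : Function.Surjective (Ideal.Quotient.mkₐ ↥L m) := Ideal.Quotient.mkₐ_surjective ↥L m
  have hkerF : ∀ x : R, (Ideal.Quotient.mkₐ F m) x = 0 ↔ x ^ 2 = 0 := by
    intro x
    rw [show ((Ideal.Quotient.mkₐ F m) x = 0) ↔ x ∈ m from Ideal.Quotient.eq_zero_iff_mem, hm, hNil]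
  have hkerL : ∀ x : R, (Ideal.Quotient.mkₐ ↥L m) x = 0 ↔ x ^ 2 = 0 := by
    intro x
    rw [show ((Ideal.Quotient.mkₐ ↥L m) x = 0) ↔ x ∈ m from Ideal.Quotient.eq_zero_iff_mem, hm, hNil]
  have hconicL : ∀ x : R, ∃ a : ↥L, x ^ 2 = algebraMap ↥L R a := by
    intro x
    obtain ⟨a, ha⟩ := hconic x
    refine ⟨⟨algebraMap F R a, L.algebraMap_mem a⟩, ?_⟩
    rw [ha]
    rfl
  have hsqL : ∀ x : ↥L, ∃ c : F, x ^ 2 = algebraMap F ↥L c := by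
    intro x
    obtain ⟨a, ha⟩ := hconic (x : R)
    refine ⟨a, Subtype.ext ?_⟩
    push_cast
    exact ha
  -- squares in the residue field
  have hsqKF : ∀ y : R ⧸ m, ∃ c : F, y ^ 2 = algebraMap F (R ⧸ m) c := by
    intro y
    obtain ⟨x, rfl⟩ := hπF y
    obtain ⟨a, ha⟩ := hconic x
    exact ⟨a, by rw [← map_pow, ha, AlgHom.commutes]⟩
  have hsqKL : ∀ y : R ⧸ m, ∃ c : ↥L, y ^ 2 = algebraMap ↥L (R ⧸ m) c := by
    intro y
    obtain ⟨x, rfl⟩ := hπL y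
    obtain ⟨a, ha⟩ := hconicL x
    exact ⟨a, by rw [← map_pow, ha, AlgHom.commutes]⟩
  -- degrees are powers of two
  obtain ⟨t1, ht1⟩ := gen_exists F (R ⧸ m)
  obtain ⟨tF, _, _, hrkF⟩ := ext_exists F (R ⧸ m) hsqKF t1 ht1
  obtain ⟨t2, ht2⟩ := gen_exists ↥L (R ⧸ m)
  obtain ⟨tL, _, _, hrkL⟩ := ext_exists ↥L (R ⧸ m) hsqKL t2 ht2
  obtain ⟨t3, ht3⟩ := gen_exists F ↥L
  obtain ⟨tE, _, _, hrkE⟩ := ext_exists F ↥L hsqL t3 ht3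
  -- three applications of the rank formula
  have app1 := rank_formula F R (R ⧸ m) (Ideal.Quotient.mkₐ F m) hπF hkerF hconic tF.card hrkF
  have app2 := rank_formula ↥L R (R ⧸ m) (Ideal.Quotient.mkₐ ↥L m) hπL hkerL hconicL tL.card hrkL
  have hkerid : ∀ x : ↥L, (AlgHom.id F ↥L) x = 0 ↔ x ^ 2 = 0 := by
    intro x
    show x = 0 ↔ x ^ 2 = 0
    rw [pow_eq_zero_iff (two_ne_zero)]
  have app3 := rank_formula F ↥L ↥L (AlgHom.id F ↥L) Function.surjective_id hkerid hsqL tE.card hrkE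
  have hμL : sInf {n : ℕ | ∃ s : Finset ↥L, s.card = n ∧
      Ideal.span (s : Set ↥L) = nilradical ↥L} = 0 := by
    have hred : nilradical ↥L = 0 := nilradical_eq_zero ↥L
    refine Nat.sInf_eq_zero.mpr (Or.inl ?_)
    exact ⟨∅, Finset.card_empty, by rw [Finset.coe_empty, Ideal.span_empty, hred, Ideal.zero_eq_bot]⟩
  -- tower formula
  have htower : finrank F ↥L * finrank ↥L (R ⧸ m) = finrank F (R ⧸ m) :=
    finrank_mul_finrank F ↥L (R ⧸ m)
  have hexp : tF.card = tE.card + tL.card := by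
    have hpow : (2:ℕ) ^ tF.card = 2 ^ (tE.card + tL.card) := by
      rw [← hrkF, ← htower, hrkE, hrkL, pow_add]
    exact Nat.pow_right_injective le_rfl hpow
  rw [app1, app2, app3, hμL, hexp]
  omega
end

section
/- Let F be a field of characteristic 2 and let R and R' be finite-dimensional totally singular conic F-algebras with dim_F R = 2^{r_F(R)} and dim_F R' = 2^{r_F(R')}. Let K and K' be maximal subfields of R and R' containing F, respectively. Then R and R' are isomorphic as F-algebras if and only if dim_F R = dim_F R' and K ≅ K' as F-algebras. -/
open Module Submodule Finset

namespace TSC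

theorem charA (F : Type*) {A : Type*} [Field F] [CharP F 2] [CommRing A] [Algebra F A]
    [Nontrivial A] : CharP A 2 :=
  charP_of_injective_algebraMap ((algebraMap F A).injective) 2

theorem alg_inj {F A : Type*} [Field F] [CommRing A] [Algebra F A] [Nontrivial A]
    {a b : F} (h : algebraMap F A a = algebraMap F A b) : a = b :=
  (algebraMap F A).injective h

theorem add_eq_zero' {A : Type*} [CommRing A] [CharP A 2] {x y : A} (h : x + y = 0) : x = y := by
  have : x + (y + y) = 0 + y := by rw [← add_assoc, h]
  simpa [CharTwo.add_self_eq_zero] using this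

theorem sq_inj {A : Type*} [CommRing A] [CharP A 2] (hred : ∀ z : A, z ^ 2 = 0 → z = 0)
    {x y : A} (h : x ^ 2 = y ^ 2) : x = y := by
  refine add_eq_zero' (hred _ ?_)
  rw [CharTwo.add_sq, h, CharTwo.add_self_eq_zero]

theorem mono_mul {A ι : Type*} [CommRing A] [DecidableEq ι] (x : ι → A) (S T : Finset ι) :
    (∏ i ∈ S, x i) * ∏ i ∈ T, x i
      = (∏ i ∈ S ∩ T, x i ^ 2) * ∏ i ∈ symmDiff S T, x i := by
  have h1 : S ∪ T = symmDiff S T ∪ (S ∩ T) := by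
    have := symmDiff_sup_inf S T
    simp only [Finset.sup_eq_union, Finset.inf_eq_inter] at this
    rw [this]
  have h2 : Disjoint (symmDiff S T) (S ∩ T) := by
    simpa [Finset.inf_eq_inter] using disjoint_symmDiff_inf S T
  calc (∏ i ∈ S, x i) * ∏ i ∈ T, x i
      = (∏ i ∈ S ∪ T, x i) * ∏ i ∈ S ∩ T, x i := (Finset.prod_union_inter).symm
    _ = ((∏ i ∈ symmDiff S T, x i) * ∏ i ∈ S ∩ T, x i) * ∏ i ∈ S ∩ T, x i := by
        rw [h1, Finset.prod_union h2]
    _ = (∏ i ∈ symmDiff S T, x i) * ∏ i ∈ S ∩ T, (x i * x i) := by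
        rw [mul_assoc, ← Finset.prod_mul_distrib]
    _ = (∏ i ∈ S ∩ T, x i ^ 2) * ∏ i ∈ symmDiff S T, x i := by
        rw [mul_comm]
        congr 1
        exact Finset.prod_congr rfl fun i _ => (pow_two (x i)).symm

section Span
variable {F : Type*} [Field F] [CharP F 2] {A : Type*} [CommRing A] [Algebra F A]

theorem mono_mul_scalar {ι : Type*} [DecidableEq ι] {x : ι → A} {c : ι → F}
    (hc : ∀ i, x i ^ 2 = algebraMap F A (c i)) (S T : Finset ι) :
    (∏ i ∈ S, x i) * ∏ i ∈ T, x i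
      = (∏ i ∈ S ∩ T, c i) • ∏ i ∈ symmDiff S T, x i := by
  rw [mono_mul, Algebra.smul_def]
  congr 1
  rw [map_prod]
  exact Finset.prod_congr rfl fun i _ => hc i

theorem adjoin_eq_span_mono {ι : Type*} [Fintype ι] [DecidableEq ι] {x : ι → A} {c : ι → F}
    (hc : ∀ i, x i ^ 2 = algebraMap F A (c i)) :
    Submodule.span F (Set.range fun S : Finset ι => ∏ i ∈ S, x i)
      = Subalgebra.toSubmodule (Algebra.adjoin F (Set.range x)) := by
  refine le_antisymm ?_ ?_
  · rw [Submodule.span_le]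
    rintro _ ⟨S, rfl⟩
    exact Subalgebra.prod_mem _ fun i _ => Algebra.subset_adjoin ⟨i, rfl⟩
  · intro z hz
    have hmulc : ∀ a ∈ Submodule.span F (Set.range fun S : Finset ι => ∏ i ∈ S, x i),
        ∀ b ∈ Submodule.span F (Set.range fun S : Finset ι => ∏ i ∈ S, x i),
        a * b ∈ Submodule.span F (Set.range fun S : Finset ι => ∏ i ∈ S, x i) := by
      intro a ha b hb
      have h := Submodule.mul_mem_mul ha hb
      rw [Submodule.span_mul_span] at h
      refine Submodule.span_le.mpr ?_ h
      rintro _ ⟨_, ⟨S, rfl⟩, _, ⟨T, rfl⟩, rfl⟩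
      dsimp only
      rw [mono_mul_scalar hc]
      exact Submodule.smul_mem _ _ (Submodule.subset_span ⟨symmDiff S T, rfl⟩)
    have hone : (1 : A) ∈ Submodule.span F (Set.range fun S : Finset ι => ∏ i ∈ S, x i) := by
      have h : (1 : A) = ∏ i ∈ (∅ : Finset ι), x i := by simp
      rw [h]; exact Submodule.subset_span ⟨∅, rfl⟩
    induction hz using Algebra.adjoin_induction with
    | mem y hy =>
      obtain ⟨i, rfl⟩ := hy
      have h : x i = ∏ j ∈ ({i} : Finset ι), x j := by simp
      rw [h]
      exact Submodule.subset_span ⟨{i}, rfl⟩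
    | algebraMap r =>
      have := Submodule.smul_mem _ r hone
      rwa [Algebra.smul_def, mul_one] at this
    | add y z hy hz ihy ihz => exact Submodule.add_mem _ ihy ihz
    | mul y z hy hz ihy ihz => exact hmulc _ ihy _ ihz

end Span

section Iso
variable {F : Type*} [Field F] {A A' : Type*} [CommRing A] [CommRing A']
  [Algebra F A] [Algebra F A']

theorem iso_of_structure_constants {ι : Type*}
    (b : Basis ι F A) (b' : Basis ι F A') (σ : ι → ι → F) (τ : ι → ι → ι) (i₀ : ι)
    (h1 : b i₀ = 1) (h1' : b' i₀ = 1)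
    (hm : ∀ i j, b i * b j = σ i j • b (τ i j))
    (hm' : ∀ i j, b' i * b' j = σ i j • b' (τ i j)) :
    Nonempty (A ≃ₐ[F] A') := by
  let f : A ≃ₗ[F] A' := b.equiv b' (Equiv.refl ι)
  have hfb : ∀ i, f (b i) = b' i := fun i => b.equiv_apply i b' (Equiv.refl ι)
  have hmul : ∀ x y : A, f (x * y) = f x * f y := by
    have hbil : (LinearMap.mul F A).compr₂ f.toLinearMap
        = (LinearMap.mul F A').compl₁₂ f.toLinearMap f.toLinearMap := by
      apply LinearMap.ext_basis b b
      intro i j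
      simp only [LinearMap.compr₂_apply, LinearMap.compl₁₂_apply, LinearMap.mul_apply',
        LinearEquiv.coe_coe]
      rw [hm, map_smul, hfb, hfb, hfb, hm']
    intro x y
    have h := LinearMap.congr_fun (LinearMap.congr_fun hbil x) y
    simpa only [LinearMap.compr₂_apply, LinearMap.compl₁₂_apply, LinearMap.mul_apply',
      LinearEquiv.coe_coe] using h
  have hone : f 1 = 1 := by rw [← h1, hfb, h1']
  exact ⟨AlgEquiv.ofLinearEquiv f hone hmul⟩

end Iso

section Subfields
variable {F : Type*} [Field F] [CharP F 2] {A : Type*} [CommRing A] [Algebra F A]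

theorem mem_adjoin_pair {K : Subalgebra F A} {y : A} {a : F} (hy : y ^ 2 = algebraMap F A a)
    {z : A} (hz : z ∈ Algebra.adjoin F ((K : Set A) ∪ {y})) :
    ∃ u ∈ K, ∃ v ∈ K, z = u + v * y := by
  let W : Subalgebra F A :=
    { carrier := {w | ∃ u ∈ K, ∃ v ∈ K, w = u + v * y}
      mul_mem' := by
        rintro w₁ w₂ ⟨u, hu, v, hv, rfl⟩ ⟨u', hu', v', hv', rfl⟩
        refine ⟨u * u' + v * v' * algebraMap F A a,
          add_mem (mul_mem hu hu') (mul_mem (mul_mem hv hv') (K.algebraMap_mem a)),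
          u * v' + v * u', add_mem (mul_mem hu hv') (mul_mem hv hu'), ?_⟩
        have hexp : (u + v * y) * (u' + v' * y)
            = (u * u' + v * v' * y ^ 2) + (u * v' + v * u') * y := by ring
        rw [hexp, hy]
      add_mem' := by
        rintro w₁ w₂ ⟨u, hu, v, hv, rfl⟩ ⟨u', hu', v', hv', rfl⟩
        exact ⟨u + u', add_mem hu hu', v + v', add_mem hv hv', by ring⟩
      one_mem' := ⟨1, one_mem K, 0, zero_mem K, by ring⟩
      algebraMap_mem' := fun r => ⟨algebraMap F A r, K.algebraMap_mem r, 0, zero_mem K, by ring⟩ }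
  have hle : Algebra.adjoin F ((K : Set A) ∪ {y}) ≤ W := by
    apply Algebra.adjoin_le
    rintro w (hw | hw)
    · exact ⟨w, hw, 0, zero_mem K, by ring⟩
    · rw [Set.mem_singleton_iff] at hw
      subst hw
      exact ⟨0, zero_mem K, 1, one_mem K, by ring⟩
  exact hle hz

theorem exists_inv_of_reduced [Nontrivial A]
    (hconic : ∀ x : A, ∃ a : F, x ^ 2 = algebraMap F A a)
    {K : Subalgebra F A} (hred : ∀ z ∈ K, z ^ 2 = (0 : A) → z = 0)
    {v : A} (hv : v ∈ K) (hv0 : v ≠ 0) : ∃ w ∈ K, v * w = 1 := by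
  obtain ⟨a, ha⟩ := hconic v
  have ha0 : a ≠ 0 := by
    rintro rfl
    exact hv0 (hred v hv (by rw [ha, map_zero]))
  refine ⟨a⁻¹ • v, K.smul_mem hv _, ?_⟩
  rw [mul_smul_comm, ← pow_two, ha, Algebra.smul_def, ← map_mul, inv_mul_cancel₀ ha0, map_one]

theorem isField_of_reduced [Nontrivial A]
    (hconic : ∀ x : A, ∃ a : F, x ^ 2 = algebraMap F A a)
    {K : Subalgebra F A} (hred : ∀ z ∈ K, z ^ 2 = (0 : A) → z = 0) : IsField K := by
  refine ⟨⟨0, 1, fun h => zero_ne_one (α := A) (congrArg Subtype.val h)⟩, mul_comm, ?_⟩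
  · rintro ⟨v, hv⟩ hv0
    have hv0' : v ≠ 0 := fun h => hv0 (Subtype.ext h)
    obtain ⟨w, hw, hvw⟩ := exists_inv_of_reduced hconic hred hv hv0'
    exact ⟨⟨w, hw⟩, Subtype.ext hvw⟩

theorem reduced_of_isField [Nontrivial A] {K : Subalgebra F A} (hKfield : IsField K) :
    ∀ z ∈ K, z ^ 2 = (0 : A) → z = 0 := by
  intro z hz h2
  letI : Field K := hKfield.toField
  have hsub : (⟨z, hz⟩ : K) ^ 2 = 0 := Subtype.ext (by simpa using h2)
  have := (pow_eq_zero_iff (two_ne_zero)).mp hsub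
  exact congrArg Subtype.val this

theorem max_sq_surj [Nontrivial A]
    (hconic : ∀ x : A, ∃ a : F, x ^ 2 = algebraMap F A a)
    {K : Subalgebra F A} (hKfield : IsField K)
    (hKmax : ∀ K₁ : Subalgebra F A, IsField K₁ → K ≤ K₁ → K = K₁) (x : A) :
    ∃ s ∈ K, s ^ 2 = x ^ 2 := by
  haveI := charA F (A := A)
  have hredK := reduced_of_isField (F := F) hKfield
  by_cases hex : ∃ s ∈ K, s ^ 2 = x ^ 2
  · exact hex
  · obtain ⟨a, ha⟩ := hconic x
    have hLfield : IsField (Algebra.adjoin F ((K : Set A) ∪ {x})) := by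
      refine ⟨⟨0, 1, fun h => zero_ne_one (congrArg Subtype.val h)⟩, mul_comm, ?_⟩
      rintro ⟨z, hzL⟩ hz0
      obtain ⟨u, hu, v, hv, rfl⟩ := mem_adjoin_pair ha hzL
      obtain ⟨au, hau⟩ := hconic u
      obtain ⟨av, hav⟩ := hconic v
      have hzsq : (u + v * x) ^ 2 = algebraMap F A (au + av * a) := by
        rw [CharTwo.add_sq, mul_pow, hau, hav, ha, map_add, map_mul]
      by_cases hc0 : au + av * a = 0
      · exfalso
        have hva : au = av * a := add_eq_zero' hc0
        by_cases hv0 : v = 0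
        · have hav0 : av = 0 := by
            apply alg_inj (A := A)
            rw [← hav, hv0, map_zero]
            ring
          have hau0 : au = 0 := by rw [hva, hav0, zero_mul]
          have hu0 : u = 0 := hredK u hu (by rw [hau, hau0, map_zero])
          apply hz0
          apply Subtype.ext
          simp [hu0, hv0]
        · have hav0 : av ≠ 0 := by
            intro h
            exact hv0 (hredK v hv (by rw [hav, h, map_zero]))
          apply hex
          refine ⟨u * (av⁻¹ • v), mul_mem hu (K.smul_mem hv _), ?_⟩
          rw [mul_pow, smul_pow, hau, hav, Algebra.smul_def, ← map_mul, ← map_mul, ha]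
          have hsc : au * (av⁻¹ ^ 2 * av) = a := by
            field_simp
            rw [hva]
          rw [hsc]
      · refine ⟨⟨(au + av * a)⁻¹ • (u + v * x), Subalgebra.smul_mem _ hzL _⟩, ?_⟩
        apply Subtype.ext
        have : (u + v * x) * ((au + av * a)⁻¹ • (u + v * x)) = 1 := by
          rw [mul_smul_comm, ← pow_two, hzsq, Algebra.smul_def, ← map_mul,
            inv_mul_cancel₀ hc0, map_one]
        simpa using this
    have hKeq := hKmax _ hLfield (fun z hz => Algebra.subset_adjoin (Or.inl hz))
    have hxK : x ∈ K := by
      rw [hKeq]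
      exact Algebra.subset_adjoin (Or.inr rfl)
    exact ⟨x, hxK, rfl⟩

end Subfields

section FieldIso
variable {F : Type*} [Field F] [CharP F 2] {A B : Type*} [CommRing A] [CommRing B]
  [Algebra F A] [Algebra F B] [Nontrivial A] [Nontrivial B]

theorem conic_hom (hconicA : ∀ x : A, ∃ a : F, x ^ 2 = algebraMap F A a)
    (hredB : ∀ z : B, z ^ 2 = 0 → z = 0)
    (hAB : ∀ a : F, (∃ x : A, x ^ 2 = algebraMap F A a) → (∃ y : B, y ^ 2 = algebraMap F B a)) :
    ∃ f : A →ₐ[F] B, ∀ (x : A) (a : F), x ^ 2 = algebraMap F A a →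
      (f x) ^ 2 = algebraMap F B a := by
  haveI := charA F (A := A)
  haveI := charA F (A := B)
  choose q hq using hconicA
  have key : ∀ x : A, ∃ y : B, y ^ 2 = algebraMap F B (q x) := fun x => hAB (q x) ⟨x, hq x⟩
  choose f hf using key
  have huniq : ∀ y y' : B, y ^ 2 = y' ^ 2 → y = y' := fun y y' h => sq_inj hredB h
  have hkey : ∀ (x : A) (a : F), x ^ 2 = algebraMap F A a → (f x) ^ 2 = algebraMap F B a := by
    intro x a hxa
    have hqa : q x = a := alg_inj (A := A) ((hq x).symm.trans hxa)
    rw [hf x, hqa]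
  have fadd : ∀ x y : A, f (x + y) = f x + f y := by
    intro x y
    refine huniq _ _ ?_
    rw [hkey (x + y) (q x + q y) (by rw [CharTwo.add_sq, hq, hq, map_add]),
      CharTwo.add_sq, hf, hf, map_add]
  have fmul : ∀ x y : A, f (x * y) = f x * f y := by
    intro x y
    refine huniq _ _ ?_
    rw [hkey (x * y) (q x * q y) (by rw [mul_pow, hq, hq, map_mul]), mul_pow, hf, hf, map_mul]
  have fone : f 1 = 1 := by
    refine huniq _ _ ?_
    rw [hkey 1 1 (by simp), one_pow, map_one]
  have fzero : f 0 = 0 := by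
    refine huniq _ _ ?_
    rw [hkey 0 0 (by simp [zero_pow]), map_zero]
    simp
  have fcomm : ∀ r : F, f (algebraMap F A r) = algebraMap F B r := by
    intro r
    refine huniq _ _ ?_
    rw [hkey _ (r ^ 2) (by rw [map_pow]), map_pow]
  exact ⟨⟨⟨⟨⟨f, fone⟩, fmul⟩, fzero, fadd⟩, fcomm⟩, hkey⟩

theorem conic_iso (hconicA : ∀ x : A, ∃ a : F, x ^ 2 = algebraMap F A a)
    (hconicB : ∀ y : B, ∃ a : F, y ^ 2 = algebraMap F B a)
    (hredA : ∀ z : A, z ^ 2 = 0 → z = 0) (hredB : ∀ z : B, z ^ 2 = 0 → z = 0)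
    (hAB : ∀ a : F, (∃ x : A, x ^ 2 = algebraMap F A a) → (∃ y : B, y ^ 2 = algebraMap F B a))
    (hBA : ∀ a : F, (∃ y : B, y ^ 2 = algebraMap F B a) → (∃ x : A, x ^ 2 = algebraMap F A a)) :
    Nonempty (A ≃ₐ[F] B) := by
  haveI := charA F (A := A)
  haveI := charA F (A := B)
  obtain ⟨f, hf⟩ := conic_hom hconicA hredB hAB
  obtain ⟨g, hg⟩ := conic_hom hconicB hredA hBA
  refine ⟨AlgEquiv.ofAlgHom f g ?_ ?_⟩
  · apply AlgHom.ext
    intro y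
    obtain ⟨b, hb⟩ := hconicB y
    exact sq_inj hredB ((hf _ _ (hg y b hb)).trans hb.symm)
  · apply AlgHom.ext
    intro x
    obtain ⟨a, hax⟩ := hconicA x
    exact sq_inj hredA ((hg _ _ (hf x a hax)).trans hax.symm)

end FieldIso

section Greedy
variable {F : Type*} [Field F] [CharP F 2] {A : Type*} [CommRing A] [Algebra F A] [Nontrivial A]

theorem adjoin_insert_congr {s t : Set A} (h : Algebra.adjoin F s = Algebra.adjoin F t) (x : A) :
    Algebra.adjoin F (insert x s) = Algebra.adjoin F (insert x t) := by
  have aux : ∀ {s t : Set A}, Algebra.adjoin F s = Algebra.adjoin F t →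
      Algebra.adjoin F (insert x s) ≤ Algebra.adjoin F (insert x t) := by
    intro s t h
    apply Algebra.adjoin_le
    intro z hz
    rcases Set.mem_insert_iff.mp hz with rfl | hz
    · exact Algebra.subset_adjoin (Set.mem_insert _ _)
    · exact Algebra.adjoin_mono (Set.subset_insert _ _) (h ▸ Algebra.subset_adjoin hz)
  exact le_antisymm (aux h) (aux h.symm)

theorem greedy (hconic : ∀ x : A, ∃ a : F, x ^ 2 = algebraMap F A a) (l : List A) :
    ∃ c n : List A, c.length + n.length = l.length ∧ (∀ z ∈ n, z ^ 2 = (0 : A)) ∧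
      (∀ z ∈ Algebra.adjoin F {y : A | y ∈ c}, z ^ 2 = (0 : A) → z = 0) ∧
      Algebra.adjoin F ({y : A | y ∈ c} ∪ {y : A | y ∈ n})
        = Algebra.adjoin F {y : A | y ∈ l} := by
  haveI := charA F (A := A)
  induction l with
  | nil =>
    refine ⟨[], [], rfl, by simp, ?_, by simp⟩
    have hset : {y : A | y ∈ ([] : List A)} = (∅ : Set A) := by ext; simp
    intro z hz h2
    rw [hset, Algebra.adjoin_empty, Algebra.mem_bot] at hz
    obtain ⟨r, rfl⟩ := hz
    rw [← map_pow] at h2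
    have hr : r ^ 2 = 0 := alg_inj (A := A) (h2.trans (map_zero _).symm)
    rw [pow_eq_zero_iff two_ne_zero] at hr
    rw [hr, map_zero]
  | cons x l ih =>
    obtain ⟨c, n, hlen, hn, hred, hadj⟩ := ih
    have hsetx : {y : A | y ∈ x :: l} = insert x {y : A | y ∈ l} := by ext; simp
    by_cases hs : ∃ s ∈ Algebra.adjoin F {y : A | y ∈ c}, s ^ 2 = x ^ 2
    · obtain ⟨s, hsmem, hs2⟩ := hs
      have hsetn : {y : A | y ∈ (x + s) :: n} = insert (x + s) {y : A | y ∈ n} := by ext; simp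
      have hlT : Algebra.adjoin F ({y : A | y ∈ c} ∪ {y : A | y ∈ n})
          ≤ Algebra.adjoin F {y : A | y ∈ x :: l} := by
        rw [hadj]
        exact Algebra.adjoin_mono (fun z hz => by
          simp only [Set.mem_setOf_eq, List.mem_cons] at hz ⊢
          exact Or.inr hz)
      have hsT : s ∈ Algebra.adjoin F {y : A | y ∈ x :: l} :=
        hlT (Algebra.adjoin_mono Set.subset_union_left hsmem)
      have hsC : s ∈ Algebra.adjoin F ({y : A | y ∈ c} ∪ {y : A | y ∈ (x + s) :: n}) :=
        Algebra.adjoin_mono Set.subset_union_left hsmem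
      refine ⟨c, (x + s) :: n, by simp only [List.length_cons] at *; omega, ?_, hred, ?_⟩
      · intro z hz
        rcases List.mem_cons.mp hz with rfl | hz
        · rw [CharTwo.add_sq, hs2, CharTwo.add_self_eq_zero]
        · exact hn z hz
      · refine le_antisymm (Algebra.adjoin_le ?_) (Algebra.adjoin_le ?_)
        · rintro z (hz | hz)
          · exact hlT (Algebra.subset_adjoin (Or.inl hz))
          · rw [Set.mem_setOf_eq, List.mem_cons] at hz
            rcases hz with rfl | hz
            · refine add_mem (Algebra.subset_adjoin ?_) hsT
              simp
            · exact hlT (Algebra.subset_adjoin (Or.inr hz))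
        · intro z hz
          rw [hsetx] at hz
          rcases Set.mem_insert_iff.mp hz with rfl | hz
          · have h1 : z + s ∈ Algebra.adjoin F ({y : A | y ∈ c} ∪ {y : A | y ∈ (z + s) :: n}) :=
              Algebra.subset_adjoin (Or.inr (by simp))
            have h2 := add_mem h1 hsC
            have hx : z + s + s = z := by
              rw [add_assoc, CharTwo.add_self_eq_zero, add_zero]
            rwa [hx] at h2
          · refine Algebra.adjoin_mono (Set.union_subset_union_right _ ?_)
              (hadj.symm ▸ Algebra.subset_adjoin hz : z ∈ _)
            intro w hw
            rw [hsetn]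
            exact Set.subset_insert _ _ hw
    · obtain ⟨a, ha⟩ := hconic x
      have hcset : {y : A | y ∈ x :: c} = insert x {y : A | y ∈ c} := by ext; simp
      have hadj_ins : Algebra.adjoin F {y : A | y ∈ x :: c}
          = Algebra.adjoin F ((Algebra.adjoin F {y : A | y ∈ c} : Set A) ∪ {x}) := by
        rw [hcset]
        refine le_antisymm (Algebra.adjoin_le ?_) (Algebra.adjoin_le ?_)
        · intro z hz
          rcases Set.mem_insert_iff.mp hz with rfl | hz
          · exact Algebra.subset_adjoin (Or.inr rfl)
          · exact Algebra.subset_adjoin (Or.inl (Algebra.subset_adjoin hz))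
        · rintro z (hz | hz)
          · exact Algebra.adjoin_mono (Set.subset_insert _ _) hz
          · rw [Set.mem_singleton_iff] at hz
            subst hz
            exact Algebra.subset_adjoin (Set.mem_insert _ _)
      refine ⟨x :: c, n, by simp only [List.length_cons] at *; omega, hn, ?_, ?_⟩
      · intro z hz h2
        rw [hadj_ins] at hz
        obtain ⟨u, hu, v, hv, rfl⟩ := mem_adjoin_pair ha hz
        obtain ⟨au, hau⟩ := hconic u
        obtain ⟨av, hav⟩ := hconic v
        have hzsq : (u + v * x) ^ 2 = algebraMap F A (au + av * a) := by
          rw [CharTwo.add_sq, mul_pow, hau, hav, ha, map_add, map_mul]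
        have hc0 : au + av * a = 0 := alg_inj (A := A) ((hzsq.symm.trans h2).trans (map_zero _).symm)
        have hva : au = av * a := add_eq_zero' hc0
        by_cases hv0 : v = 0
        · have hav0 : av = 0 := by
            apply alg_inj (A := A)
            rw [← hav, hv0, map_zero]
            ring
          have hau0 : au = 0 := by rw [hva, hav0, zero_mul]
          have hu0 : u = 0 := hred u hu (by rw [hau, hau0, map_zero])
          rw [hu0, hv0]
          ring
        · exfalso
          have hav0 : av ≠ 0 := fun h => hv0 (hred v hv (by rw [hav, h, map_zero]))
          apply hs
          refine ⟨u * (av⁻¹ • v), mul_mem hu (Subalgebra.smul_mem _ hv _), ?_⟩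
          rw [mul_pow, smul_pow, hau, hav, Algebra.smul_def, ← map_mul, ← map_mul, ha]
          have hsc : au * (av⁻¹ ^ 2 * av) = a := by
            field_simp
            rw [hva]
          rw [hsc]
      · rw [hsetx, hcset, Set.insert_union]
        exact adjoin_insert_congr hadj x

theorem exists_minRank_gen [FiniteDimensional F A] :
    ∃ s : Finset A, s.card = minRank F A ∧ Algebra.adjoin F (s : Set A) = ⊤ := by
  have hne : {n : ℕ | ∃ s : Finset A, s.card = n ∧ Algebra.adjoin F (s : Set A) = ⊤}.Nonempty := by
    classical
    let b := Module.finBasis F A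
    refine ⟨(Finset.image b Finset.univ).card, Finset.image b Finset.univ, rfl, ?_⟩
    rw [eq_top_iff]
    intro z _
    have hz : z ∈ Submodule.span F (Set.range b) := by rw [b.span_eq]; trivial
    have hle : Submodule.span F (Set.range b)
        ≤ Subalgebra.toSubmodule (Algebra.adjoin F ((Finset.image b Finset.univ : Finset A) : Set A)) := by
      rw [Submodule.span_le]
      rintro _ ⟨i, rfl⟩
      exact Algebra.subset_adjoin (by simp)
    exact hle hz
  obtain ⟨s, hs, htop⟩ := Nat.sInf_mem hne
  exact ⟨s, hs, htop⟩

end Greedy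

section Normal
variable {F : Type*} [Field F] [CharP F 2] {A : Type*} [CommRing A] [Algebra F A] [Nontrivial A]

theorem pair_mul {k m : ℕ} {xc : Fin k → A} {nn : Fin m → A} {c : Fin k → F}
    (hxc : ∀ i, xc i ^ 2 = algebraMap F A (c i)) (hnn : ∀ j, nn j ^ 2 = 0)
    (p q : Finset (Fin k) × Finset (Fin m)) :
    ((∏ i ∈ p.1, xc i) * ∏ j ∈ p.2, nn j) * ((∏ i ∈ q.1, xc i) * ∏ j ∈ q.2, nn j)
      = ((∏ i ∈ p.1 ∩ q.1, c i) * ∏ j ∈ p.2 ∩ q.2, (0 : F)) •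
        ((∏ i ∈ symmDiff p.1 q.1, xc i) * ∏ j ∈ symmDiff p.2 q.2, nn j) := by
  have h1 := mono_mul_scalar (A := A) hxc p.1 q.1
  have h2 := mono_mul_scalar (A := A) (x := nn) (c := fun _ => (0 : F))
    (fun j => by rw [hnn j, map_zero]) p.2 q.2
  calc ((∏ i ∈ p.1, xc i) * ∏ j ∈ p.2, nn j) * ((∏ i ∈ q.1, xc i) * ∏ j ∈ q.2, nn j)
      = ((∏ i ∈ p.1, xc i) * ∏ i ∈ q.1, xc i) * ((∏ j ∈ p.2, nn j) * ∏ j ∈ q.2, nn j) := by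
        ring
    _ = ((∏ i ∈ p.1 ∩ q.1, c i) • ∏ i ∈ symmDiff p.1 q.1, xc i) *
        ((∏ j ∈ p.2 ∩ q.2, (0 : F)) • ∏ j ∈ symmDiff p.2 q.2, nn j) := by rw [h1, h2]
    _ = ((∏ i ∈ p.1 ∩ q.1, c i) * ∏ j ∈ p.2 ∩ q.2, (0 : F)) •
        ((∏ i ∈ symmDiff p.1 q.1, xc i) * ∏ j ∈ symmDiff p.2 q.2, nn j) := by
        rw [Algebra.smul_def, Algebra.smul_def, Algebra.smul_def, map_mul]
        ring

theorem block_basis [FiniteDimensional F A] {k m : ℕ}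
    (B : Basis (Finset (Fin k) × Finset (Fin m)) F A)
    {xc w : Fin k → A} {nn : Fin m → A}
    (hB : ∀ p : Finset (Fin k) × Finset (Fin m), B p = (∏ i ∈ p.1, xc i) * ∏ j ∈ p.2, nn j)
    (hspan : Submodule.span F (Set.range fun S : Finset (Fin k) => ∏ i ∈ S, w i)
      = Submodule.span F (Set.range fun S : Finset (Fin k) => ∏ i ∈ S, xc i)) :
    ∃ B' : Basis (Finset (Fin k) × Finset (Fin m)) F A,
      ∀ p : Finset (Fin k) × Finset (Fin m), B' p = (∏ i ∈ p.1, w i) * ∏ j ∈ p.2, nn j := by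
  set M' : Finset (Fin k) × Finset (Fin m) → A :=
    fun p => (∏ i ∈ p.1, w i) * ∏ j ∈ p.2, nn j with hM'
  have hle : ⊤ ≤ Submodule.span F (Set.range M') := by
    rw [← B.span_eq]
    apply Submodule.span_le.mpr
    rintro _ ⟨p, rfl⟩
    rw [hB]
    have hx : (∏ i ∈ p.1, xc i)
        ∈ Submodule.span F (Set.range fun S : Finset (Fin k) => ∏ i ∈ S, w i) := by
      rw [hspan]
      exact Submodule.subset_span ⟨p.1, rfl⟩
    rw [mem_span_range_iff_exists_fun] at hx
    obtain ⟨cf, hcf⟩ := hx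
    rw [← hcf, Finset.sum_mul]
    apply Submodule.sum_mem
    intro S _
    rw [smul_mul_assoc]
    exact Submodule.smul_mem _ _ (Submodule.subset_span ⟨(S, p.2), rfl⟩)
  have hcard : Fintype.card (Finset (Fin k) × Finset (Fin m)) = finrank F A :=
    (finrank_eq_card_basis B).symm
  refine ⟨basisOfTopLeSpanOfCardEqFinrank M' hle hcard, fun p => ?_⟩
  rw [coe_basisOfTopLeSpanOfCardEqFinrank]

theorem normal [FiniteDimensional F A] (hconic : ∀ x : A, ∃ a : F, x ^ 2 = algebraMap F A a)
    (hdim : finrank F A = 2 ^ minRank F A) :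
    ∃ (k m : ℕ) (xc : Fin k → A) (nn : Fin m → A) (c : Fin k → F),
      k + m = minRank F A ∧
      (∀ i, xc i ^ 2 = algebraMap F A (c i)) ∧ (∀ j, nn j ^ 2 = (0 : A)) ∧
      (∃ B : Basis (Finset (Fin k) × Finset (Fin m)) F A,
        ∀ p : Finset (Fin k) × Finset (Fin m),
          B p = (∏ i ∈ p.1, xc i) * ∏ j ∈ p.2, nn j) ∧
      (∀ z ∈ Algebra.adjoin F (Set.range xc), z ^ 2 = (0 : A) → z = 0) ∧
      (∀ z : A, ∃ s ∈ Algebra.adjoin F (Set.range xc), s ^ 2 = z ^ 2) ∧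
      Submodule.span F (Set.range fun S : Finset (Fin k) => ∏ i ∈ S, xc i)
        = Subalgebra.toSubmodule (Algebra.adjoin F (Set.range xc)) ∧
      LinearIndependent F (fun S : Finset (Fin k) => ∏ i ∈ S, xc i) := by
  haveI := charA F (A := A)
  classical
  obtain ⟨s, hcard, hadjs⟩ := exists_minRank_gen (F := F) (A := A)
  obtain ⟨c, n, hlen, hn, hred, hadjcn⟩ := greedy hconic s.toList
  have hl : {y : A | y ∈ s.toList} = (s : Set A) := by ext; simp
  set k := c.length
  set m := n.length
  set xc : Fin k → A := fun i => c.get i with hxcdef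
  set nn : Fin m → A := fun j => n.get j with hnndef
  have hrange_c : Set.range xc = {y : A | y ∈ c} := by
    ext z
    simp [hxcdef, List.mem_iff_get, Set.mem_range, eq_comm]
    exact Iff.rfl
  have hrange_n : Set.range nn = {y : A | y ∈ n} := by
    ext z
    simp [hnndef, List.mem_iff_get, Set.mem_range, eq_comm]
    exact Iff.rfl
  set cF : Fin k → F := fun i => Classical.choose (hconic (xc i)) with hcFdef
  have hcF : ∀ i, xc i ^ 2 = algebraMap F A (cF i) := fun i => Classical.choose_spec (hconic (xc i))
  have hnn : ∀ j, nn j ^ 2 = 0 := by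
    intro j
    have hmem : nn j ∈ Set.range nn := ⟨j, rfl⟩
    rw [hrange_n] at hmem
    exact hn _ hmem
  have hkm : k + m = minRank F A := by
    rw [← hcard, ← Finset.length_toList]
    exact hlen
  -- the combined family
  set zz : Fin k ⊕ Fin m → A := Sum.elim xc nn with hzzdef
  set dd : Fin k ⊕ Fin m → F := Sum.elim cF (fun _ => 0) with hdddef
  have hzd : ∀ i, zz i ^ 2 = algebraMap F A (dd i) := by
    rintro (i | j)
    · exact hcF i
    · rw [hzzdef, hdddef]
      simp only [Sum.elim_inr]
      rw [hnn j, map_zero]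
  have hadjz : Algebra.adjoin F (Set.range zz) = ⊤ := by
    rw [hzzdef, Set.Sum.elim_range, hrange_c, hrange_n, hadjcn, hl, hadjs]
  have hspanz : Submodule.span F (Set.range fun U : Finset (Fin k ⊕ Fin m) => ∏ i ∈ U, zz i)
      = ⊤ := by
    rw [adjoin_eq_span_mono hzd, hadjz]
    rfl
  set M : Finset (Fin k) × Finset (Fin m) → A :=
    fun p => (∏ i ∈ p.1, xc i) * ∏ j ∈ p.2, nn j with hM
  have hMcover : ∀ U : Finset (Fin k ⊕ Fin m), (∏ i ∈ U, zz i) = M (U.toLeft, U.toRight) := by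
    intro U
    conv_lhs => rw [← Finset.toLeft_disjSum_toRight (u := U)]
    rw [hM, hzzdef]
    exact Finset.prod_sumElim _ _ _ _
  have hspanM : ⊤ ≤ Submodule.span F (Set.range M) := by
    rw [← hspanz]
    apply Submodule.span_mono
    rintro _ ⟨U, rfl⟩
    exact ⟨(U.toLeft, U.toRight), (hMcover U).symm⟩
  have hcardM : Fintype.card (Finset (Fin k) × Finset (Fin m)) = finrank F A := by
    rw [hdim, ← hkm]
    simp [Fintype.card_finset, pow_add]
  set B := basisOfTopLeSpanOfCardEqFinrank M hspanM hcardM with hBdef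
  have hB : ∀ p, B p = M p := fun p => by
    rw [hBdef, coe_basisOfTopLeSpanOfCardEqFinrank]
  have hM2 : ∀ (S : Finset (Fin k)) (T : Finset (Fin m)),
      M (S, T) ^ 2 = if T = ∅ then algebraMap F A (∏ i ∈ S, cF i) else 0 := by
    intro S T
    rw [hM]
    simp only
    rw [mul_pow, ← Finset.prod_pow, ← Finset.prod_pow]
    by_cases hT : T = ∅
    · rw [if_pos hT, hT]
      rw [Finset.prod_empty, mul_one]
      rw [Finset.prod_congr rfl fun i _ => hcF i, ← map_prod]
    · rw [if_neg hT]
      obtain ⟨j, hj⟩ := Finset.nonempty_iff_ne_empty.mpr hT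
      rw [Finset.prod_eq_zero hj (hnn j), mul_zero]
  have hsq_surj : ∀ z : A, ∃ t ∈ Algebra.adjoin F (Set.range xc), t ^ 2 = z ^ 2 := by
    intro z
    have hrepr := B.sum_repr z
    refine ⟨∑ S : Finset (Fin k), B.repr z (S, ∅) • ∏ i ∈ S, xc i, ?_, ?_⟩
    · refine Subalgebra.sum_mem _ fun S _ => Subalgebra.smul_mem _ ?_ _
      exact Subalgebra.prod_mem _ fun i _ => Algebra.subset_adjoin ⟨i, rfl⟩
    · have e1 : z ^ 2 = ∑ p : Finset (Fin k) × Finset (Fin m), (B.repr z p) ^ 2 • (M p) ^ 2 := by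
        conv_lhs => rw [← hrepr]
        rw [CharTwo.sum_sq]
        refine Finset.sum_congr rfl fun p _ => ?_
        rw [smul_pow, hB]
      have e2 : z ^ 2 = ∑ S : Finset (Fin k),
          (B.repr z (S, ∅)) ^ 2 • algebraMap F A (∏ i ∈ S, cF i) := by
        rw [e1, Fintype.sum_prod_type]
        refine Finset.sum_congr rfl fun S _ => ?_
        rw [Finset.sum_eq_single (∅ : Finset (Fin m))]
        · rw [hM2, if_pos rfl]
        · intro T _ hT
          rw [hM2, if_neg hT, smul_zero]
        · intro h
          exact absurd (Finset.mem_univ _) h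
      have e3 : (∑ S : Finset (Fin k), B.repr z (S, ∅) • ∏ i ∈ S, xc i) ^ 2
          = ∑ S : Finset (Fin k), (B.repr z (S, ∅)) ^ 2 • algebraMap F A (∏ i ∈ S, cF i) := by
        rw [CharTwo.sum_sq]
        refine Finset.sum_congr rfl fun S _ => ?_
        rw [smul_pow, ← Finset.prod_pow, Finset.prod_congr rfl fun i _ => hcF i, ← map_prod]
      rw [e3, e2]
  have hli : LinearIndependent F (fun S : Finset (Fin k) => ∏ i ∈ S, xc i) := by
    have hliB : LinearIndependent F (⇑B) := B.linearIndependent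
    have hcomp : LinearIndependent F
        (⇑B ∘ fun S : Finset (Fin k) => (S, (∅ : Finset (Fin m)))) :=
      hliB.comp _ (fun S T h => (Prod.mk.injEq _ _ _ _).mp h |>.1)
    have heq : (⇑B ∘ fun S : Finset (Fin k) => (S, (∅ : Finset (Fin m))))
        = fun S : Finset (Fin k) => ∏ i ∈ S, xc i := by
      funext S
      simp only [Function.comp_apply]
      rw [hB, hM]
      simp
    rwa [heq] at hcomp
  exact ⟨k, m, xc, nn, cF, hkm, hcF, hnn, ⟨B, fun p => by rw [hB, hM]⟩,
    (by rw [hrange_c]; exact hred), hsq_surj, adjoin_eq_span_mono hcF, hli⟩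

end Normal

section Subtype
variable {F : Type*} [Field F] [CharP F 2] {A : Type*} [CommRing A] [Algebra F A]

theorem sub_sq_val {K : Subalgebra F A} {z : K} {a : F} (h : z ^ 2 = algebraMap F K a) :
    (z : A) ^ 2 = algebraMap F A a := by
  have h' := congrArg (Subtype.val) h
  push_cast at h'
  exact h'

theorem val_sq_sub {K : Subalgebra F A} {z : A} (hz : z ∈ K) {a : F}
    (h : z ^ 2 = algebraMap F A a) : (⟨z, hz⟩ : K) ^ 2 = algebraMap F K a := by
  apply Subtype.ext
  push_cast
  exact h

theorem conic_sub {K : Subalgebra F A} (hconic : ∀ x : A, ∃ a : F, x ^ 2 = algebraMap F A a) :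
    ∀ z : K, ∃ a : F, z ^ 2 = algebraMap F K a := by
  rintro ⟨z, hz⟩
  obtain ⟨a, ha⟩ := hconic z
  exact ⟨a, val_sq_sub hz ha⟩

theorem reduced_sub {K : Subalgebra F A} (h : ∀ z ∈ K, z ^ 2 = (0 : A) → z = 0) :
    ∀ z : K, z ^ 2 = 0 → z = 0 := by
  rintro ⟨z, hz⟩ h2
  have h2' := congrArg (Subtype.val) h2
  push_cast at h2'
  exact Subtype.ext (h z hz h2')

theorem subalgebra_mono_basis {k : ℕ} {xc : Fin k → A}
    (hspan : Submodule.span F (Set.range fun S : Finset (Fin k) => ∏ i ∈ S, xc i)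
      = Subalgebra.toSubmodule (Algebra.adjoin F (Set.range xc)))
    (hli : LinearIndependent F (fun S : Finset (Fin k) => ∏ i ∈ S, xc i)) :
    ∃ bb : Basis (Finset (Fin k)) F (Algebra.adjoin F (Set.range xc)),
      ∀ S : Finset (Fin k), (bb S : A) = ∏ i ∈ S, xc i := by
  set K₁ := Algebra.adjoin F (Set.range xc) with hK₁
  have hmem : ∀ S : Finset (Fin k), (∏ i ∈ S, xc i) ∈ K₁ :=
    fun S => Subalgebra.prod_mem _ fun i _ => Algebra.subset_adjoin ⟨i, rfl⟩
  set g : Finset (Fin k) → K₁ := fun S => ⟨∏ i ∈ S, xc i, hmem S⟩ with hg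
  have hli' : LinearIndependent F g := by
    apply LinearIndependent.of_comp K₁.val.toLinearMap
    have : (⇑K₁.val.toLinearMap ∘ g) = fun S : Finset (Fin k) => ∏ i ∈ S, xc i := rfl
    rw [this]
    exact hli
  have htop : ⊤ ≤ Submodule.span F (Set.range g) := by
    rintro ⟨u, hu⟩ -
    have hu' : u ∈ Submodule.span F (Set.range fun S : Finset (Fin k) => ∏ i ∈ S, xc i) := by
      rw [hspan]
      exact hu
    have himg : ⇑K₁.val.toLinearMap '' (Set.range g)
        = Set.range (fun S : Finset (Fin k) => ∏ i ∈ S, xc i) := by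
      rw [← Set.range_comp]
      rfl
    have hmap : u ∈ Submodule.map K₁.val.toLinearMap (Submodule.span F (Set.range g)) := by
      rw [Submodule.map_span, himg]
      exact hu'
    obtain ⟨v, hv, hvu⟩ := hmap
    have hveq : v = ⟨u, hu⟩ := Subtype.ext hvu
    rwa [hveq] at hv
  exact ⟨Basis.mk hli' htop, fun S => by rw [Basis.mk_apply]⟩

theorem val_range {K : Subalgebra F A} :
    LinearMap.range K.val.toLinearMap = Subalgebra.toSubmodule K := by
  ext z
  constructor
  · rintro ⟨v, rfl⟩
    exact v.2
  · intro hz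
    exact ⟨⟨z, hz⟩, rfl⟩

end Subtype

end TSC

open Module Submodule Finset TSC

theorem stmt_7 (F R R' : Type*) [Field F] [CharP F 2]
    [CommRing R] [Algebra F R] [FiniteDimensional F R] [Nontrivial R]
    [CommRing R'] [Algebra F R'] [FiniteDimensional F R'] [Nontrivial R']
    (hconic : ∀ x : R, ∃ a : F, x ^ 2 = algebraMap F R a)
    (hconic' : ∀ x : R', ∃ a : F, x ^ 2 = algebraMap F R' a)
    (hdim : Module.finrank F R = 2 ^ minRank F R)
    (hdim' : Module.finrank F R' = 2 ^ minRank F R')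
    -- `K` is a maximal subfield of `R` containing `F`
    (K : Subalgebra F R) (hKfield : IsField K)
    (hKmax : ∀ K₁ : Subalgebra F R, IsField K₁ → K ≤ K₁ → K = K₁)
    -- `K'` is a maximal subfield of `R'` containing `F`
    (K' : Subalgebra F R') (hK'field : IsField K')
    (hK'max : ∀ K₁ : Subalgebra F R', IsField K₁ → K' ≤ K₁ → K' = K₁) :
    Nonempty (R ≃ₐ[F] R') ↔
      (Module.finrank F R = Module.finrank F R' ∧ Nonempty (K ≃ₐ[F] K')) := by
  haveI : Nontrivial K := nontrivial_of_ne 0 1 fun h =>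
    zero_ne_one (α := R) (by simpa using congrArg Subtype.val h)
  haveI : Nontrivial K' := nontrivial_of_ne 0 1 fun h =>
    zero_ne_one (α := R') (by simpa using congrArg Subtype.val h)
  have hKq := max_sq_surj (F := F) hconic hKfield hKmax
  have hK'q := max_sq_surj (F := F) hconic' hK'field hK'max
  have hKred := reduced_of_isField (F := F) hKfield
  have hK'red := reduced_of_isField (F := F) hK'field
  constructor
  · rintro ⟨φ⟩
    refine ⟨φ.toLinearEquiv.finrank_eq, ?_⟩
    refine conic_iso (conic_sub hconic) (conic_sub hconic')
      (reduced_sub hKred) (reduced_sub hK'red) ?_ ?_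
    · rintro a ⟨z, hz⟩
      have hza : (z : R) ^ 2 = algebraMap F R a := sub_sq_val hz
      have hφ : (φ (z : R)) ^ 2 = algebraMap F R' a := by
        rw [← map_pow, hza, AlgEquiv.commutes]
      obtain ⟨s, hs, hs2⟩ := hK'q (φ (z : R))
      exact ⟨⟨s, hs⟩, val_sq_sub hs (hs2.trans hφ)⟩
    · rintro a ⟨z, hz⟩
      have hza : (z : R') ^ 2 = algebraMap F R' a := sub_sq_val hz
      have hφ : (φ.symm (z : R')) ^ 2 = algebraMap F R a := by
        rw [← map_pow, hza, AlgEquiv.commutes]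
      obtain ⟨s, hs, hs2⟩ := hKq (φ.symm (z : R'))
      exact ⟨⟨s, hs⟩, val_sq_sub hs (hs2.trans hφ)⟩
  · rintro ⟨hfr, ⟨ψ⟩⟩
    obtain ⟨k, m, xc, nn, c, hkm, hxc, hnn, ⟨B, hB⟩, hK1red, hK1q, hK1span, hK1ind⟩ :=
      normal (F := F) hconic hdim
    obtain ⟨k', m', xc', nn', c', hkm', hxc', hnn', ⟨B', hB'⟩, hK1red', hK1q', hK1span', hK1ind'⟩ :=
      normal (F := F) hconic' hdim'
    set K₁ := Algebra.adjoin F (Set.range xc) with hK₁def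
    set K₁' := Algebra.adjoin F (Set.range xc') with hK₁'def
    haveI : Nontrivial K₁ := nontrivial_of_ne 0 1 fun h =>
      zero_ne_one (α := R) (by simpa using congrArg Subtype.val h)
    haveI : Nontrivial K₁' := nontrivial_of_ne 0 1 fun h =>
      zero_ne_one (α := R') (by simpa using congrArg Subtype.val h)
    -- canonical isomorphism K₁ ≃ K
    obtain ⟨e1⟩ : Nonempty (K₁ ≃ₐ[F] K) := by
      refine conic_iso (conic_sub hconic) (conic_sub hconic)
        (reduced_sub hK1red) (reduced_sub hKred) ?_ ?_
      · rintro a ⟨z, hz⟩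
        obtain ⟨s, hs, hs2⟩ := hKq (z : R)
        exact ⟨⟨s, hs⟩, val_sq_sub hs (hs2.trans (sub_sq_val hz))⟩
      · rintro a ⟨z, hz⟩
        obtain ⟨s, hs, hs2⟩ := hK1q (z : R)
        exact ⟨⟨s, hs⟩, val_sq_sub hs (hs2.trans (sub_sq_val hz))⟩
    obtain ⟨e3⟩ : Nonempty (K' ≃ₐ[F] K₁') := by
      refine conic_iso (conic_sub hconic') (conic_sub hconic')
        (reduced_sub hK'red) (reduced_sub hK1red') ?_ ?_
      · rintro a ⟨z, hz⟩
        obtain ⟨s, hs, hs2⟩ := hK1q' (z : R')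
        exact ⟨⟨s, hs⟩, val_sq_sub hs (hs2.trans (sub_sq_val hz))⟩
      · rintro a ⟨z, hz⟩
        obtain ⟨s, hs, hs2⟩ := hK'q (z : R')
        exact ⟨⟨s, hs⟩, val_sq_sub hs (hs2.trans (sub_sq_val hz))⟩
    have Ψ : K₁ ≃ₐ[F] K₁' := (e1.trans ψ).trans e3
    -- subtype bases and dimension count
    obtain ⟨bb, hbb⟩ := subalgebra_mono_basis (F := F) hK1span hK1ind
    obtain ⟨bb', hbb'⟩ := subalgebra_mono_basis (F := F) hK1span' hK1ind'
    have hrk : Module.finrank F K₁ = 2 ^ k := by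
      rw [finrank_eq_card_basis bb]
      simp [Fintype.card_finset]
    have hrk' : Module.finrank F K₁' = 2 ^ k' := by
      rw [finrank_eq_card_basis bb']
      simp [Fintype.card_finset]
    have hkk' : k = k' := by
      have h := Ψ.toLinearEquiv.finrank_eq
      rw [hrk, hrk'] at h
      exact Nat.pow_right_injective (le_refl 2) h
    subst hkk'
    have hrr : minRank F R = minRank F R' := by
      apply Nat.pow_right_injective (le_refl 2)
      show 2 ^ minRank F R = 2 ^ minRank F R'
      rw [← hdim, ← hdim', hfr]
    have hmm' : m = m' := by omega
    subst hmm'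
    -- the transported generating family of K₁'
    have hxcmem : ∀ i, xc i ∈ K₁ := fun i => Algebra.subset_adjoin ⟨i, rfl⟩
    set w : Fin k → R' := fun i => (Ψ ⟨xc i, hxcmem i⟩ : R') with hwdef
    have hw : ∀ i, w i ^ 2 = algebraMap F R' (c i) := by
      intro i
      have h1 : (⟨xc i, hxcmem i⟩ : K₁) ^ 2 = algebraMap F K₁ (c i) := val_sq_sub _ (hxc i)
      have h2 : (Ψ ⟨xc i, hxcmem i⟩) ^ 2 = algebraMap F K₁' (c i) := by
        rw [← map_pow, h1, AlgEquiv.commutes]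
      exact sub_sq_val h2
    have hwmono : ∀ S : Finset (Fin k), (∏ i ∈ S, w i) = (Ψ (bb S) : R') := by
      intro S
      have hgS : bb S = ∏ i ∈ S, (⟨xc i, hxcmem i⟩ : K₁) := by
        apply Subtype.ext
        rw [hbb, SubmonoidClass.coe_finset_prod]
      rw [hgS, map_prod, SubmonoidClass.coe_finset_prod]
    have hwspan : Submodule.span F (Set.range fun S : Finset (Fin k) => ∏ i ∈ S, w i)
        = Submodule.span F (Set.range fun S : Finset (Fin k) => ∏ i ∈ S, xc' i) := by
      have hfun : (fun S : Finset (Fin k) => ∏ i ∈ S, w i)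
          = (⇑(K₁'.val.toLinearMap ∘ₗ Ψ.toLinearMap) ∘ ⇑bb) := by
        funext S
        rw [hwmono S]
        rfl
      have hΨtop : LinearMap.range (Ψ.toLinearMap) = (⊤ : Submodule F K₁') :=
        LinearMap.range_eq_top.mpr fun y => ⟨Ψ.symm y, by simp⟩
      rw [hfun, Set.range_comp, ← Submodule.map_span, bb.span_eq, Submodule.map_top,
        LinearMap.range_comp, hΨtop, Submodule.map_top, val_range]
      exact hK1span'.symm
    obtain ⟨B'', hB''⟩ := block_basis (F := F) B' hB' hwspan
    exact iso_of_structure_constants B B''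
      (fun p q => (∏ i ∈ p.1 ∩ q.1, c i) * ∏ j ∈ p.2 ∩ q.2, (0 : F))
      (fun p q => (symmDiff p.1 q.1, symmDiff p.2 q.2)) (∅, ∅)
      (by rw [hB]; simp) (by rw [hB'']; simp)
      (fun p q => by rw [hB, hB, hB]; exact pair_mul hxc hnn p q)
      (fun p q => by rw [hB'', hB'', hB'']; exact pair_mul hw hnn' p q)
end
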